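/- arXiv:2103.05356 — 6 statements merged into one kernel-verified Lean document; each statement's English description precedes it below -/
import Mathlib

section
/- Whitney jet compatibility estimate on a C^{1+γ} boundary: let D ⊂ ℝⁿ be a bounded domain with C^{1+γ} boundary and Φ ∈ C^{1+γ}(ℝⁿ) a defining function for D (Φ = 0 on ∂D, ∇Φ ≠ 0 on ∂D). Then sup{ |∇Φ(x)·(y−x)| / |y−x|^{1+γ} : x, y ∈ ∂D, x ≠ y } ≤ 2^{(1+γ)/2} · ‖∇Φ‖_{γ, ∂D}, where ‖∇Φ‖_{γ,∂D} = sup_{x≠y ∈ ∂D} |∇Φ(x) − ∇Φ(y)| / |x−y|^γ. -/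
open MeasureTheory Metric Set Filter Topology Bornology

set_option maxHeartbeats 1000000

/-- Bridge between `gradient` and `fderiv`. -/
lemma grad_inner_eq {n : ℕ} (Φ : EuclideanSpace ℝ (Fin n) → ℝ)
    (x v : EuclideanSpace ℝ (Fin n)) :
    (inner ℝ (gradient Φ x) v : ℝ) = fderiv ℝ Φ x v := by
  rw [gradient]
  exact InnerProductSpace.toDual_symm_apply

/-- Qualitative first-order estimate: since `Φ` is `C¹` and vanishes on the (compact)
frontier, chords of the frontier are asymptotically orthogonal to the gradient. -/
lemma qual_lemma {n : ℕ} (Φ : EuclideanSpace ℝ (Fin n) → ℝ) (hΦ : ContDiff ℝ 1 Φ)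
    (D : Set (EuclideanSpace ℝ (Fin n))) (hbd : IsBounded D)
    (hfr : ∀ x ∈ frontier D, Φ x = 0) {ε : ℝ} (hε : 0 < ε) :
    ∃ δ > 0, ∀ x ∈ frontier D, ∀ y ∈ frontier D, ‖y - x‖ ≤ δ →
      |fderiv ℝ Φ x (y - x)| ≤ ε * ‖y - x‖ := by
  have hdiff : Differentiable ℝ Φ := hΦ.differentiable one_ne_zero
  have hfrc : IsCompact (frontier D) :=
    Metric.isCompact_of_isClosed_isBounded isClosed_frontier
      (hbd.closure.subset frontier_subset_closure)
  have hK : IsCompact (Metric.cthickening 1 (frontier D)) := hfrc.cthickening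
  have hf'c : Continuous (fderiv ℝ Φ) := hΦ.continuous_fderiv one_ne_zero
  have huc := hK.uniformContinuousOn_of_continuous hf'c.continuousOn
  rw [Metric.uniformContinuousOn_iff] at huc
  obtain ⟨δ₀, hδ₀, hucd⟩ := huc ε hε
  refine ⟨min (δ₀ / 2) 1, by positivity, ?_⟩
  intro x hx y hy hxy
  have hseg : segment ℝ x y ⊆ Metric.closedBall x (min (δ₀ / 2) 1) := by
    apply (convex_closedBall x _).segment_subset
    · simp [Metric.mem_closedBall]; positivity
    · simp only [Metric.mem_closedBall, dist_eq_norm]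
      simpa [norm_sub_rev] using hxy
  have hsegK : segment ℝ x y ⊆ Metric.cthickening 1 (frontier D) := by
    intro z hz
    have h1 : z ∈ Metric.closedBall x 1 :=
      Metric.closedBall_subset_closedBall (min_le_right _ _) (hseg hz)
    exact Metric.closedBall_subset_cthickening hx 1 h1
  have hxK : x ∈ Metric.cthickening 1 (frontier D) :=
    hsegK (left_mem_segment ℝ x y)
  have hbound : ∀ z ∈ segment ℝ x y, ‖fderiv ℝ Φ z - fderiv ℝ Φ x‖ ≤ ε := by
    intro z hz
    have hzK : z ∈ Metric.cthickening 1 (frontier D) := hsegK hz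
    have hd : dist z x < δ₀ := by
      have := hseg hz
      simp only [Metric.mem_closedBall] at this
      calc dist z x ≤ min (δ₀ / 2) 1 := this
        _ ≤ δ₀ / 2 := min_le_left _ _
        _ < δ₀ := by linarith
    have := hucd z hzK x hxK hd
    rw [dist_eq_norm] at this
    exact this.le
  have hmv := Convex.norm_image_sub_le_of_norm_hasFDerivWithin_le'
    (f := Φ) (f' := fun z => fderiv ℝ Φ z) (φ := fderiv ℝ Φ x) (s := segment ℝ x y)
    (fun z _ => (hdiff z).hasFDerivAt.hasFDerivWithinAt) hbound (convex_segment x y)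
    (left_mem_segment ℝ x y) (right_mem_segment ℝ x y)
  rw [hfr x hx, hfr y hy] at hmv
  have h0 : (0:ℝ) - 0 - fderiv ℝ Φ x (y - x) = -(fderiv ℝ Φ x (y - x)) := by ring
  rw [h0, norm_neg, Real.norm_eq_abs] at hmv
  exact hmv

/-- Crossing lemma: if the directional derivative of `Φ` along the chord is positive at both
endpoints, then the open chord meets the frontier. -/
lemma cross_lemma {n : ℕ} (Φ : EuclideanSpace ℝ (Fin n) → ℝ) (hΦ : ContDiff ℝ 1 Φ)
    (D : Set (EuclideanSpace ℝ (Fin n))) (hDdef : D = {x | Φ x < 0})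
    (hfr : ∀ x ∈ frontier D, Φ x = 0)
    (x y : EuclideanSpace ℝ (Fin n)) (hx : x ∈ frontier D) (hy : y ∈ frontier D)
    (ha : 0 < fderiv ℝ Φ x (y - x)) (hb : 0 < fderiv ℝ Φ y (y - x)) :
    ∃ t ∈ Set.Ioo (0:ℝ) 1, x + t • (y - x) ∈ frontier D := by
  have hdiff : Differentiable ℝ Φ := hΦ.differentiable one_ne_zero
  set ℓ : ℝ → EuclideanSpace ℝ (Fin n) := fun t => x + t • (y - x) with hℓdef
  have hℓc : Continuous ℓ := by fun_prop
  set g : ℝ → ℝ := fun t => Φ (ℓ t) with hgdef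
  have hgc : Continuous g := hΦ.continuous.comp hℓc
  have hℓ0 : ℓ 0 = x := by simp [hℓdef]
  have hℓ1 : ℓ 1 = y := by simp [hℓdef]
  have hg0 : g 0 = 0 := by rw [hgdef]; simp only [hℓ0]; exact hfr x hx
  have hg1 : g 1 = 0 := by rw [hgdef]; simp only [hℓ1]; exact hfr y hy
  have hg : ∀ t, HasDerivAt g (fderiv ℝ Φ (ℓ t) (y - x)) t := by
    intro t
    have h1 : HasDerivAt ℓ (y - x) t := by
      exact (((hasDerivAt_id t).smul_const (y - x)).const_add x).congr_deriv (one_smul ℝ _)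
    exact (hdiff (ℓ t)).hasFDerivAt.comp_hasDerivAt t h1
  -- positivity just right of 0
  have hev0 : ∀ᶠ t in 𝓝[>] (0:ℝ), 0 < g t := by
    have hs0 : Tendsto (slope g 0) (𝓝[≠] (0:ℝ)) (𝓝 (fderiv ℝ Φ x (y - x))) := by
      have := (hg 0)
      rw [hℓ0] at this
      exact hasDerivAt_iff_tendsto_slope.mp this
    have h1 : ∀ᶠ t in 𝓝[≠] (0:ℝ), 0 < slope g 0 t := hs0.eventually (eventually_gt_nhds ha)
    have h2 : 𝓝[>] (0:ℝ) ≤ 𝓝[≠] (0:ℝ) :=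
      nhdsWithin_mono 0 (fun t ht => ne_of_gt ht)
    filter_upwards [h2 h1, self_mem_nhdsWithin] with t hslope htpos
    rw [slope_def_field, hg0, sub_zero, sub_zero] at hslope
    have := mul_pos hslope htpos
    rwa [div_mul_cancel₀ _ (ne_of_gt htpos)] at this
  -- negativity just left of 1
  have hev1 : ∀ᶠ t in 𝓝[<] (1:ℝ), g t < 0 := by
    have hs1 : Tendsto (slope g 1) (𝓝[≠] (1:ℝ)) (𝓝 (fderiv ℝ Φ y (y - x))) := by
      have := (hg 1)
      rw [hℓ1] at this
      exact hasDerivAt_iff_tendsto_slope.mp this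
    have h1 : ∀ᶠ t in 𝓝[≠] (1:ℝ), 0 < slope g 1 t := hs1.eventually (eventually_gt_nhds hb)
    have h2 : 𝓝[<] (1:ℝ) ≤ 𝓝[≠] (1:ℝ) :=
      nhdsWithin_mono 1 (fun t ht => ne_of_lt ht)
    filter_upwards [h2 h1, self_mem_nhdsWithin] with t hslope htlt
    rw [slope_def_field, hg1, sub_zero] at hslope
    have htlt' : t < 1 := htlt
    have h3 : t - 1 < 0 := by linarith
    rcases div_pos_iff.mp hslope with ⟨h4, h5⟩ | ⟨h4, h5⟩
    · linarith
    · linarith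
  -- a point with negative value in (0,1)
  have hfe : ∀ᶠ t in 𝓝[<] (1:ℝ), g t < 0 ∧ t ∈ Set.Ioo (0:ℝ) 1 := by
    filter_upwards [hev1, Ioo_mem_nhdsLT_of_mem (by norm_num : (1:ℝ) ∈ Set.Ioc (0:ℝ) 1)]
      with t h1 h2 using ⟨h1, h2⟩
  obtain ⟨t₁, ht₁g, ht₁m⟩ := hfe.exists
  -- a right neighborhood of 0 where g is positive
  obtain ⟨u, hu, huIoo⟩ := mem_nhdsGT_iff_exists_Ioo_subset.mp hev0
  set N : Set ℝ := {t | t ∈ Set.Ioo (0:ℝ) 1 ∧ g t < 0} with hNdef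
  have hNne : N.Nonempty := ⟨t₁, ht₁m, ht₁g⟩
  have hNbdd : BddBelow N := ⟨0, fun t ht => ht.1.1.le⟩
  set t₀ : ℝ := sInf N with ht₀def
  have hNlb : ∀ s ∈ N, u ≤ s := by
    intro s hs
    by_contra hcon
    push_neg at hcon
    have : 0 < g s := huIoo ⟨hs.1.1, hcon⟩
    linarith [hs.2]
  have hu0 : 0 < u := hu
  have ht₀pos : 0 < t₀ := lt_of_lt_of_le hu0 (le_csInf hNne hNlb)
  have ht₀lt1 : t₀ < 1 := lt_of_le_of_lt (csInf_le hNbdd ⟨ht₁m, ht₁g⟩) ht₁m.2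
  have hgt₀le : g t₀ ≤ 0 := by
    have h1 : t₀ ∈ closure N := csInf_mem_closure hNne hNbdd
    have h2 : closure N ⊆ {t | g t ≤ 0} :=
      closure_minimal (fun t ht => ht.2.le) (isClosed_le hgc continuous_const)
    exact h2 h1
  have hgt₀ : g t₀ = 0 := by
    rcases lt_or_eq_of_le hgt₀le with hlt | heq
    · exfalso
      have hev : ∀ᶠ t in 𝓝 t₀, g t < 0 := hgc.continuousAt.eventually_lt continuous_const.continuousAt hlt
      have hev' : ∀ᶠ t in 𝓝[<] t₀, g t < 0 ∧ t ∈ Set.Ioo (0:ℝ) t₀ := by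
        filter_upwards [nhdsWithin_le_nhds hev,
          Ioo_mem_nhdsLT_of_mem (⟨ht₀pos, le_refl t₀⟩ : t₀ ∈ Set.Ioc (0:ℝ) t₀)]
          with t h1 h2 using ⟨h1, h2⟩
      obtain ⟨t₂, h1, h2⟩ := hev'.exists
      have ht₂N : t₂ ∈ N := ⟨⟨h2.1, lt_trans h2.2 ht₀lt1⟩, h1⟩
      have := csInf_le hNbdd ht₂N
      linarith [h2.2]
    · exact heq
  -- ℓ t₀ is in the frontier
  have hDopen : IsOpen D := by
    rw [hDdef]; exact isOpen_lt hΦ.continuous continuous_const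
  have hzcl : ℓ t₀ ∈ closure D := by
    rw [Metric.mem_closure_iff]
    intro ε hε
    have hca : ContinuousAt ℓ t₀ := hℓc.continuousAt
    obtain ⟨μ, hμ0, hμ⟩ := Metric.continuousAt_iff.mp hca ε hε
    obtain ⟨sN, hsN, hsNlt⟩ := Real.lt_sInf_add_pos hNne hμ0
    have hsge : t₀ ≤ sN := csInf_le hNbdd hsN
    have hd : dist sN t₀ < μ := by
      rw [Real.dist_eq, abs_of_nonneg (by linarith)]
      linarith [hsNlt]
    refine ⟨ℓ sN, ?_, ?_⟩
    · rw [hDdef]; exact hsN.2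
    · rw [dist_comm]; exact hμ hd
  have hznotD : ℓ t₀ ∉ D := by
    rw [hDdef]
    simp only [Set.mem_setOf_eq, not_lt]
    rw [show Φ (ℓ t₀) = g t₀ from rfl, hgt₀]
  refine ⟨t₀, ⟨ht₀pos, ht₀lt1⟩, ?_⟩
  rw [frontier, hDopen.interior_eq]
  exact ⟨hzcl, hznotD⟩

/-- Whitney jet compatibility on a `C^{1+γ}` boundary: for a `C^{1+γ}` defining function
`Φ` of a bounded domain `D` and any bound `H` for the Hölder seminorm of `∇Φ` on `∂D`,
`|∇Φ(x)·(y−x)| ≤ 2^{(1+γ)/2} H |y−x|^{1+γ}` for `x, y ∈ ∂D`. -/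
theorem stmt_10 (n : ℕ) (γ : ℝ) (hγ : 0 < γ) (hγ1 : γ < 1)
    (D : Set (EuclideanSpace ℝ (Fin n))) (Φ : EuclideanSpace ℝ (Fin n) → ℝ)
    (hbd : IsBounded D) (hΦ : ContDiff ℝ 1 Φ)
    (hDdef : D = {x | Φ x < 0})
    (hfr : ∀ x ∈ frontier D, Φ x = 0)
    (hgrad : ∀ x ∈ frontier D, gradient Φ x ≠ 0)
    (H : ℝ)
    (hH : ∀ x ∈ frontier D, ∀ y ∈ frontier D,
      ‖gradient Φ x - gradient Φ y‖ ≤ H * ‖x - y‖ ^ γ) :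
    ∀ x ∈ frontier D, ∀ y ∈ frontier D,
      |(inner ℝ (gradient Φ x) (y - x) : ℝ)|
        ≤ 2 ^ ((1 + γ) / 2) * H * ‖y - x‖ ^ (1 + γ) := by
  intro x hx y hy
  rcases eq_or_ne y x with rfl | hyx
  · rw [sub_self, inner_zero_right, abs_zero, norm_zero,
      Real.zero_rpow (by positivity : (1:ℝ) + γ ≠ 0), mul_zero]
  -- basic positivity facts
  have hr0 : (0:ℝ) < ‖y - x‖ := by
    rw [norm_pos_iff]; exact sub_ne_zero.mpr hyx
  have hH0 : 0 ≤ H := by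
    have h1 : (0:ℝ) ≤ H * ‖x - y‖ ^ γ := le_trans (norm_nonneg _) (hH x hx y hy)
    have h2 : (0:ℝ) < ‖x - y‖ ^ γ := by
      apply Real.rpow_pos_of_pos
      rw [norm_sub_rev]; exact hr0
    exact (mul_nonneg_iff_of_pos_right h2).mp h1
  -- square root facts
  have hsq2pos : (0:ℝ) < Real.sqrt 2 := Real.sqrt_pos.mpr (by norm_num)
  have hsq2ge1 : (1:ℝ) ≤ Real.sqrt 2 := by
    rw [show (1:ℝ) = Real.sqrt 1 from (Real.sqrt_one).symm]
    exact Real.sqrt_le_sqrt (by norm_num)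
  have hsqinv_lt1 : Real.sqrt 2⁻¹ < 1 := by
    have := Real.sqrt_lt_sqrt (by norm_num : (0:ℝ) ≤ 2⁻¹) (by norm_num : (2:ℝ)⁻¹ < 1)
    rwa [Real.sqrt_one] at this
  have hsqinv_ge : (1:ℝ)/2 ≤ Real.sqrt 2⁻¹ := by
    rw [show (2:ℝ)⁻¹ = ((1:ℝ)/2)^2 * 2 by norm_num, Real.sqrt_mul (by positivity),
      Real.sqrt_sq (by norm_num : (0:ℝ) ≤ 1/2)]
    nlinarith [hsq2ge1, Real.sq_sqrt (by norm_num : (0:ℝ) ≤ 2)]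
  have hmulinv : Real.sqrt 2 * Real.sqrt 2⁻¹ = 1 := by
    rw [Real.sqrt_inv]
    exact mul_inv_cancel₀ (ne_of_gt hsq2pos)
  have hbase0 : (0:ℝ) < 1 - Real.sqrt 2⁻¹ := by linarith
  -- the scale constants
  set s : ℝ := (1 - Real.sqrt 2⁻¹) ^ (γ⁻¹) with hsdef
  have hs0 : 0 < s := Real.rpow_pos_of_pos hbase0 _
  have hsγ : s ^ γ = 1 - Real.sqrt 2⁻¹ := Real.rpow_inv_rpow hbase0.le (ne_of_gt hγ)
  have hs_le : s ≤ 1 - Real.sqrt 2⁻¹ := by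
    have h1 : (1:ℝ) ≤ γ⁻¹ := (one_le_inv₀ hγ).mpr hγ1.le
    calc s ≤ (1 - Real.sqrt 2⁻¹) ^ (1:ℝ) :=
          Real.rpow_le_rpow_of_exponent_ge hbase0 (by linarith) h1
      _ = 1 - Real.sqrt 2⁻¹ := Real.rpow_one _
  have hs_half : s ≤ 1/2 := by linarith
  set τ : ℝ := 1 - s with hτdef
  have hτ_lt1 : τ < 1 := by simp only [hτdef]; linarith
  have hτ_half : (1:ℝ)/2 ≤ τ := by simp only [hτdef]; linarith
  have hτ0 : 0 < τ := by linarith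
  -- key convexity-type inequality
  have hkey : ∀ t : ℝ, τ < t → t < 1 →
      t ^ γ + Real.sqrt 2 * (1 - t) ^ γ ≤ Real.sqrt 2 := by
    intro t ht1 ht2
    have h0t : 0 < t := lt_trans (by linarith) ht1
    have h1 : t ^ γ ≤ 1 := Real.rpow_le_one h0t.le ht2.le hγ.le
    have h2 : (1 - t) ^ γ ≤ s ^ γ :=
      Real.rpow_le_rpow (by linarith) (by simp only [hτdef] at ht1; linarith) hγ.le
    rw [hsγ] at h2
    have h3 : Real.sqrt 2 * (1 - t) ^ γ ≤ Real.sqrt 2 * (1 - Real.sqrt 2⁻¹) :=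
      mul_le_mul_of_nonneg_left h2 hsq2pos.le
    have h4 : Real.sqrt 2 * (1 - Real.sqrt 2⁻¹) = Real.sqrt 2 - 1 := by
      rw [mul_sub, hmulinv, mul_one]
    linarith
  -- rpow helpers
  have hrpow_split : ∀ q : ℝ, 0 < q → q ^ (1 + γ) = q * q ^ γ := by
    intro q hq
    rw [Real.rpow_add hq, Real.rpow_one]
  -- pair estimate from the Hölder hypothesis
  have hpair : ∀ u ∈ frontier D, ∀ v ∈ frontier D, ∀ w : EuclideanSpace ℝ (Fin n),
      |fderiv ℝ Φ u w - fderiv ℝ Φ v w| ≤ H * ‖u - v‖ ^ γ * ‖w‖ := by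
    intro u hu v hv w
    have h1 : fderiv ℝ Φ u w - fderiv ℝ Φ v w
        = (inner ℝ (gradient Φ u - gradient Φ v) w : ℝ) := by
      rw [inner_sub_left, grad_inner_eq, grad_inner_eq]
    rw [h1]
    exact (abs_real_inner_le_norm _ _).trans
      (mul_le_mul_of_nonneg_right (hH u hu v hv) (norm_nonneg _))
  -- main ε-claim
  have main : ∀ ε > (0:ℝ), ∀ x' ∈ frontier D, ∀ y' ∈ frontier D, x' ≠ y' →
      |fderiv ℝ Φ x' (y' - x')| ≤
        Real.sqrt 2 * H * ‖y' - x'‖ ^ (1 + γ) + ε * ‖y' - x'‖ := by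
    intro ε hε
    obtain ⟨δ, hδ0, hδ⟩ := qual_lemma Φ hΦ D hbd hfr hε
    have IND : ∀ k : ℕ, ∀ x' ∈ frontier D, ∀ y' ∈ frontier D, x' ≠ y' →
        ‖y' - x'‖ * τ ^ k ≤ δ →
        |fderiv ℝ Φ x' (y' - x')| ≤
          Real.sqrt 2 * H * ‖y' - x'‖ ^ (1 + γ) + ε * ‖y' - x'‖ := by
      intro k
      induction k with
      | zero =>
        intro x' hx' y' hy' hne hr
        have h1 := hδ x' hx' y' hy' (by simpa using hr)
        have h2 : (0:ℝ) ≤ Real.sqrt 2 * H * ‖y' - x'‖ ^ (1 + γ) := by positivity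
        linarith
      | succ k ih =>
        intro x' hx' y' hy' hne hr
        have hrr0 : (0:ℝ) < ‖y' - x'‖ := by
          rw [norm_pos_iff]; exact sub_ne_zero.mpr (Ne.symm hne)
        set r : ℝ := ‖y' - x'‖ with hrdef
        set a : ℝ := fderiv ℝ Φ x' (y' - x') with hadef
        have hrpow0 : (0:ℝ) < r ^ (1 + γ) := Real.rpow_pos_of_pos hrr0 _
        by_cases hcase : |a| ≤ H * r ^ (1 + γ)
        · have h2 : H * r ^ (1 + γ) ≤ Real.sqrt 2 * H * r ^ (1 + γ) := by
            have h2a : (0:ℝ) ≤ H * r ^ (1 + γ) := by positivity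
            nlinarith [mul_nonneg (by linarith : (0:ℝ) ≤ Real.sqrt 2 - 1) h2a]
          have h3 : (0:ℝ) ≤ ε * r := by positivity
          linarith
        · push_neg at hcase
          set b : ℝ := fderiv ℝ Φ y' (y' - x') with hbdef
          have hab : |a - b| ≤ H * r ^ (1 + γ) := by
            have h1 := hpair x' hx' y' hy' (y' - x')
            rw [← hadef, ← hbdef, ← hrdef] at h1
            rw [norm_sub_rev x' y', ← hrdef] at h1
            calc |a - b| ≤ H * r ^ γ * r := h1
              _ = H * r ^ (1 + γ) := by rw [hrpow_split r hrr0]; ring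
          -- produce a crossing point z = x' + t • (y' - x') in the frontier
          have hcross : ∃ t ∈ Set.Ioo (0:ℝ) 1, x' + t • (y' - x') ∈ frontier D := by
            rcases lt_or_gt_of_ne (fun h0 : a = 0 => by
              rw [h0, abs_zero] at hcase; nlinarith) with haneg | hapos
            · -- a < 0, hence b < 0; apply the crossing lemma to (y', x')
              have hbneg : b < 0 := by
                have h1 : b - a ≤ |a - b| := by
                  rw [abs_sub_comm]; exact le_abs_self _
                have h2 : -a = |a| := (abs_of_neg haneg).symm
                linarith [hcase]
              have h3 : (0:ℝ) < fderiv ℝ Φ y' (x' - y') := by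
                rw [show x' - y' = -(y' - x') by abel, map_neg]
                rw [← hbdef]; linarith
              have h4 : (0:ℝ) < fderiv ℝ Φ x' (x' - y') := by
                rw [show x' - y' = -(y' - x') by abel, map_neg]
                rw [← hadef]; linarith
              obtain ⟨t', ht', hz⟩ := cross_lemma Φ hΦ D hDdef hfr y' x' hy' hx' h3 h4
              refine ⟨1 - t', ⟨by linarith [ht'.2], by linarith [ht'.1]⟩, ?_⟩
              have heq : y' + t' • (x' - y') = x' + (1 - t') • (y' - x') := by
                module
              rwa [heq] at hz
            · -- a > 0, hence b > 0
              have hbpos : 0 < b := by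
                have h1 : a - b ≤ |a - b| := le_abs_self _
                have h2 : a = |a| := (abs_of_pos hapos).symm
                linarith [hcase]
              exact cross_lemma Φ hΦ D hDdef hfr x' y' hx' hy'
                (by rw [← hadef]; exact hapos) (by rw [← hbdef]; exact hbpos)
          obtain ⟨t, ht, hzfr⟩ := hcross
          set z : EuclideanSpace ℝ (Fin n) := x' + t • (y' - x') with hzdef
          have ht0 : 0 < t := ht.1
          have ht1 : t < 1 := ht.2
          have h1t0 : 0 < 1 - t := by linarith
          have hz_sub_x : z - x' = t • (y' - x') := by rw [hzdef]; abel
          have hy_sub_z : y' - z = (1 - t) • (y' - x') := by rw [hzdef]; module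
          have hnzx : ‖z - x'‖ = t * r := by
            rw [hz_sub_x, norm_smul, Real.norm_eq_abs, abs_of_pos ht0, hrdef]
          have hnyz : ‖y' - z‖ = (1 - t) * r := by
            rw [hy_sub_z, norm_smul, Real.norm_eq_abs, abs_of_pos h1t0, hrdef]
          have hzx_ne : x' ≠ z := by
            intro hcon
            have : z - x' = 0 := by rw [hcon]; abel
            rw [hz_sub_x] at this
            have := smul_eq_zero.mp this
            rcases this with h | h
            · exact (ne_of_gt ht0) h
            · exact (sub_ne_zero.mpr (Ne.symm hne)) h
          have hzy_ne : z ≠ y' := by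
            intro hcon
            have : y' - z = 0 := by rw [hcon]; abel
            rw [hy_sub_z] at this
            have := smul_eq_zero.mp this
            rcases this with h | h
            · exact (ne_of_gt h1t0) h
            · exact (sub_ne_zero.mpr (Ne.symm hne)) h
          set c : ℝ := fderiv ℝ Φ z (y' - x') with hcdef
          -- |a - c| ≤ H * t^γ * r^(1+γ)
          have hac : |a - c| ≤ H * t ^ γ * r ^ (1 + γ) := by
            have h1 := hpair x' hx' z hzfr (y' - x')
            rw [← hadef, ← hcdef, ← hrdef] at h1
            have h2 : ‖x' - z‖ = t * r := by rw [norm_sub_rev]; exact hnzx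
            rw [h2] at h1
            calc |a - c| ≤ H * (t * r) ^ γ * r := h1
              _ = H * (t ^ γ * r ^ γ) * r := by
                  rw [Real.mul_rpow ht0.le hrr0.le]
              _ = H * t ^ γ * r ^ (1 + γ) := by
                  rw [hrpow_split r hrr0]; ring
          by_cases htτ : t ≤ τ
          · -- use the pair (x', z)
            have hscale : ‖z - x'‖ * τ ^ k ≤ δ := by
              rw [hnzx]
              calc t * r * τ ^ k ≤ τ * r * τ ^ k := by
                    apply mul_le_mul_of_nonneg_right _ (pow_nonneg hτ0.le k)
                    exact mul_le_mul_of_nonneg_right htτ hrr0.le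
                _ = r * τ ^ (k + 1) := by ring
                _ ≤ δ := hr
            have hih := ih x' hx' z hzfr hzx_ne hscale
            have hFxz : fderiv ℝ Φ x' (z - x') = t * a := by
              rw [hz_sub_x, ContinuousLinearMap.map_smul, smul_eq_mul, hadef]
            rw [hFxz, hnzx] at hih
            have hih2 : t * |a| ≤ Real.sqrt 2 * H * (t ^ (1+γ) * r ^ (1+γ)) + ε * (t * r) := by
              rw [abs_mul, abs_of_pos ht0] at hih
              calc t * |a| ≤ Real.sqrt 2 * H * (t * r) ^ (1 + γ) + ε * (t * r) := hih
                _ = Real.sqrt 2 * H * (t ^ (1+γ) * r ^ (1+γ)) + ε * (t * r) := by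
                    rw [Real.mul_rpow ht0.le hrr0.le]
            have htγ1 : t ^ γ ≤ 1 := Real.rpow_le_one ht0.le ht1.le hγ.le
            have hih3 : |a| ≤ Real.sqrt 2 * H * (t ^ γ * r ^ (1+γ)) + ε * r := by
              rw [hrpow_split t ht0] at hih2
              have := (mul_le_mul_iff_of_pos_left ht0).mp (by linarith [hih2] : t * |a| ≤ t * (Real.sqrt 2 * H * (t ^ γ * r ^ (1+γ)) + ε * r))
              linarith [this]
            have h5 : Real.sqrt 2 * H * (t ^ γ * r ^ (1+γ)) ≤ Real.sqrt 2 * H * r ^ (1+γ) := by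
              have h6 : t ^ γ * r ^ (1+γ) ≤ r ^ (1+γ) := by
                nlinarith [Real.rpow_nonneg ht0.le γ]
              have h7 := mul_le_mul_of_nonneg_left h6
                (by positivity : (0:ℝ) ≤ Real.sqrt 2 * H)
              calc Real.sqrt 2 * H * (t ^ γ * r ^ (1+γ))
                  = Real.sqrt 2 * H * (t ^ γ * r ^ (1+γ)) := rfl
                _ ≤ Real.sqrt 2 * H * r ^ (1+γ) := by
                    rw [mul_assoc, mul_assoc]
                    exact mul_le_mul_of_nonneg_left
                      (mul_le_mul_of_nonneg_left h6 hH0) hsq2pos.le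
            linarith
          · -- use the pair (z, y')
            push_neg at htτ
            have hscale : ‖y' - z‖ * τ ^ k ≤ δ := by
              rw [hnyz]
              have h1 : 1 - t ≤ τ := by
                have : 1 - t < s := by simp only [hτdef] at htτ; linarith
                linarith [hs_half, hτ_half]
              calc (1 - t) * r * τ ^ k ≤ τ * r * τ ^ k := by
                    apply mul_le_mul_of_nonneg_right _ (pow_nonneg hτ0.le k)
                    exact mul_le_mul_of_nonneg_right h1 hrr0.le
                _ = r * τ ^ (k + 1) := by ring
                _ ≤ δ := hr
            have hih := ih z hzfr y' hy' hzy_ne hscale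
            have hFzy : fderiv ℝ Φ z (y' - z) = (1 - t) * c := by
              rw [hy_sub_z, ContinuousLinearMap.map_smul, smul_eq_mul, hcdef]
            rw [hFzy, hnyz] at hih
            have hih2 : (1 - t) * |c| ≤
                Real.sqrt 2 * H * ((1-t) ^ (1+γ) * r ^ (1+γ)) + ε * ((1-t) * r) := by
              rw [abs_mul, abs_of_pos h1t0] at hih
              calc (1 - t) * |c| ≤ Real.sqrt 2 * H * ((1-t) * r) ^ (1 + γ) + ε * ((1-t) * r) := hih
                _ = Real.sqrt 2 * H * ((1-t) ^ (1+γ) * r ^ (1+γ)) + ε * ((1-t) * r) := by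
                    rw [Real.mul_rpow h1t0.le hrr0.le]
            have hih3 : |c| ≤ Real.sqrt 2 * H * ((1-t) ^ γ * r ^ (1+γ)) + ε * r := by
              rw [hrpow_split (1-t) h1t0] at hih2
              have := (mul_le_mul_iff_of_pos_left h1t0).mp (by linarith [hih2] :
                (1-t) * |c| ≤ (1-t) * (Real.sqrt 2 * H * ((1-t) ^ γ * r ^ (1+γ)) + ε * r))
              linarith [this]
            have habs : |a| ≤ |c| + |a - c| := by
              calc |a| = |c + (a - c)| := by ring_nf
                _ ≤ |c| + |a - c| := abs_add_le _ _
            have hsum : |a| ≤ (t ^ γ + Real.sqrt 2 * (1-t) ^ γ) * (H * r ^ (1+γ)) + ε * r := by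
              calc |a| ≤ |c| + |a - c| := habs
                _ ≤ (Real.sqrt 2 * H * ((1-t) ^ γ * r ^ (1+γ)) + ε * r)
                    + H * t ^ γ * r ^ (1 + γ) := by linarith [hih3, hac]
                _ = (t ^ γ + Real.sqrt 2 * (1-t) ^ γ) * (H * r ^ (1+γ)) + ε * r := by ring
            have hk2 := hkey t htτ ht1
            have hHr : (0:ℝ) ≤ H * r ^ (1+γ) := by positivity
            calc |a| ≤ (t ^ γ + Real.sqrt 2 * (1-t) ^ γ) * (H * r ^ (1+γ)) + ε * r := hsum
              _ ≤ Real.sqrt 2 * (H * r ^ (1+γ)) + ε * r := by nlinarith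
              _ = Real.sqrt 2 * H * r ^ (1+γ) + ε * r := by ring
    -- apply the induction at a sufficiently large scale
    intro x' hx' y' hy' hne
    have hrr0 : (0:ℝ) < ‖y' - x'‖ := by
      rw [norm_pos_iff]; exact sub_ne_zero.mpr (Ne.symm hne)
    obtain ⟨k, hk⟩ := exists_pow_lt_of_lt_one (div_pos hδ0 hrr0) hτ_lt1
    have hscale : ‖y' - x'‖ * τ ^ k ≤ δ := by
      have := (lt_div_iff₀ hrr0).mp hk
      linarith [this]
    exact IND k x' hx' y' hy' hne hscale
  -- let ε → 0
  have hfd : |fderiv ℝ Φ x (y - x)| ≤ Real.sqrt 2 * H * ‖y - x‖ ^ (1 + γ) := by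
    by_contra hcon
    push_neg at hcon
    set B : ℝ := Real.sqrt 2 * H * ‖y - x‖ ^ (1 + γ) with hBdef
    set ε : ℝ := (|fderiv ℝ Φ x (y - x)| - B) / (2 * ‖y - x‖) with hεdef
    have hε0 : 0 < ε := by
      apply div_pos (by linarith) (by linarith)
    have := main ε hε0 x hx y hy (Ne.symm hyx)
    rw [← hBdef] at this
    have hεr : ε * ‖y - x‖ = (|fderiv ℝ Φ x (y - x)| - B) / 2 := by
      rw [hεdef]; field_simp
    rw [hεr] at this
    linarith
  rw [grad_inner_eq]
  calc |fderiv ℝ Φ x (y - x)| ≤ Real.sqrt 2 * H * ‖y - x‖ ^ (1 + γ) := hfd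
    _ ≤ 2 ^ ((1 + γ) / 2) * H * ‖y - x‖ ^ (1 + γ) := by
      have h1 : Real.sqrt 2 = (2:ℝ) ^ ((1:ℝ)/2) := Real.sqrt_eq_rpow 2
      have h2 : (2:ℝ) ^ ((1:ℝ)/2) ≤ (2:ℝ) ^ ((1 + γ)/2) :=
        Real.rpow_le_rpow_of_exponent_le (by norm_num) (by linarith)
      have h3 : (0:ℝ) ≤ H * ‖y - x‖ ^ (1 + γ) := by positivity
      calc Real.sqrt 2 * H * ‖y - x‖ ^ (1 + γ)
          = Real.sqrt 2 * (H * ‖y - x‖ ^ (1 + γ)) := by ring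
        _ ≤ 2 ^ ((1 + γ)/2) * (H * ‖y - x‖ ^ (1 + γ)) := by
            rw [h1]; exact mul_le_mul_of_nonneg_right h2 h3
        _ = 2 ^ ((1 + γ) / 2) * H * ‖y - x‖ ^ (1 + γ) := by ring
end

section
/- Implicit-function gradient bound: let Φ ∈ C^{1+γ} near 0 with Φ(0)=0, ∂_j Φ(0)=0 for 1 ≤ j ≤ n−1, ∂_n Φ(0) = |∇Φ(0)| > 0, and let δ satisfy δ^γ = |∇Φ(0)| / (2‖∇Φ‖_γ) where ‖∇Φ‖_γ is the Hölder seminorm of ∇Φ on the zero set of Φ near 0. If the zero set of Φ in B(0,δ) is the graph y_n = φ(y') of a C^{1+γ} function φ with φ(0)=0, then |∇φ(z')| ≤ (2^{1+γ/2} ‖∇Φ‖_γ / |∇Φ(0)|) |z'|^γ for all z' in the domain of φ with (z', φ(z')) ∈ B(0,δ). -/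
open MeasureTheory Metric Set Filter Topology
open scoped RealInnerProductSpace

/-- The point `(z', φ z')` of `ℝ^{n+1}` on the graph of `φ`. -/
noncomputable def graphPoint11 {n : ℕ} (φ : EuclideanSpace ℝ (Fin n) → ℝ)
    (z' : EuclideanSpace ℝ (Fin n)) : EuclideanSpace ℝ (Fin (n + 1)) :=
  (WithLp.equiv 2 (Fin (n + 1) → ℝ)).symm fun i =>
    Fin.lastCases (φ z') (fun j => z' j) i

/-- The first `n` coordinates of a point of `ℝ^{n+1}`. -/
noncomputable def dropLast11 {n : ℕ} (y : EuclideanSpace ℝ (Fin (n + 1))) :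
    EuclideanSpace ℝ (Fin n) :=
  (WithLp.equiv 2 (Fin n → ℝ)).symm fun j => y j.castSucc

noncomputable def emb11 (n : ℕ) : EuclideanSpace ℝ (Fin n) →L[ℝ] EuclideanSpace ℝ (Fin (n+1)) :=
  LinearMap.toContinuousLinearMap
  { toFun := fun x => (WithLp.equiv 2 (Fin (n+1) → ℝ)).symm fun i => Fin.lastCases 0 (fun j => x j) i
    map_add' := by
      intro x y
      ext i
      induction i using Fin.lastCases <;>
        simp [PiLp.toLp_apply]
    map_smul' := by
      intro c x
      ext i
      induction i using Fin.lastCases <;>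
        simp [PiLp.toLp_apply] }

@[simp] lemma emb11_castSucc {n : ℕ} (x : EuclideanSpace ℝ (Fin n)) (j : Fin n) :
    emb11 n x (Fin.castSucc j) = x j := by
  simp [emb11, PiLp.toLp_apply]

@[simp] lemma emb11_last {n : ℕ} (x : EuclideanSpace ℝ (Fin n)) :
    emb11 n x (Fin.last n) = 0 := by
  simp [emb11, PiLp.toLp_apply]

lemma graphPoint11_eq {n : ℕ} (φ : EuclideanSpace ℝ (Fin n) → ℝ) (z' : EuclideanSpace ℝ (Fin n)) :
    graphPoint11 φ z' = emb11 n z' + φ z' • EuclideanSpace.single (Fin.last n) (1:ℝ) := by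
  ext i
  induction i using Fin.lastCases with
  | last => simp [graphPoint11, PiLp.toLp_apply, EuclideanSpace.single_apply]
  | cast j => simp [graphPoint11, PiLp.toLp_apply, EuclideanSpace.single_apply,
      (Fin.castSucc_lt_last j).ne]

@[simp] lemma dropLast11_apply {n : ℕ} (u : EuclideanSpace ℝ (Fin (n+1))) (j : Fin n) :
    dropLast11 u j = u (Fin.castSucc j) := rfl

lemma inner_emb11 {n : ℕ} (u : EuclideanSpace ℝ (Fin (n+1))) (v : EuclideanSpace ℝ (Fin n)) :
    ⟪u, emb11 n v⟫ = ⟪dropLast11 u, v⟫ := by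
  simp only [PiLp.inner_apply, RCLike.inner_apply, conj_trivial]
  rw [Fin.sum_univ_castSucc]
  simp

lemma norm_dropLast11_le {n : ℕ} (u : EuclideanSpace ℝ (Fin (n+1))) :
    ‖dropLast11 u‖ ≤ ‖u‖ := by
  rw [EuclideanSpace.norm_eq, EuclideanSpace.norm_eq]
  apply Real.sqrt_le_sqrt
  rw [Fin.sum_univ_castSucc]
  have : (0:ℝ) ≤ ‖u (Fin.last n)‖ ^ 2 := sq_nonneg _
  simp only [dropLast11_apply]
  linarith

lemma norm_sq_emb11_add {n : ℕ} (x : EuclideanSpace ℝ (Fin n)) (c : ℝ) :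
    ‖emb11 n x + c • EuclideanSpace.single (Fin.last n) (1:ℝ)‖ ^ 2 = ‖x‖ ^ 2 + c ^ 2 := by
  rw [← real_inner_self_eq_norm_sq, ← real_inner_self_eq_norm_sq]
  simp only [PiLp.inner_apply, RCLike.inner_apply, conj_trivial]
  rw [Fin.sum_univ_castSucc]
  have h1 : ∀ j : Fin n, (emb11 n x + c • EuclideanSpace.single (Fin.last n) (1:ℝ)) (Fin.castSucc j) = x j := by
    intro j
    simp [EuclideanSpace.single_apply, (Fin.castSucc_lt_last j).ne]
  have h2 : (emb11 n x + c • EuclideanSpace.single (Fin.last n) (1:ℝ)) (Fin.last n) = c := by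
    simp [EuclideanSpace.single_apply]
  simp only [h1, h2]
  ring

lemma dropLast11_emb11_add {n : ℕ} (x : EuclideanSpace ℝ (Fin n)) (c : ℝ) :
    dropLast11 (emb11 n x + c • EuclideanSpace.single (Fin.last n) (1:ℝ)) = x := by
  ext j
  simp [EuclideanSpace.single_apply, (Fin.castSucc_lt_last j).ne]

lemma last_emb11_add {n : ℕ} (x : EuclideanSpace ℝ (Fin n)) (c : ℝ) :
    (emb11 n x + c • EuclideanSpace.single (Fin.last n) (1:ℝ)) (Fin.last n) = c := by
  simp [EuclideanSpace.single_apply]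

lemma dropLast11_sub {n : ℕ} (u v : EuclideanSpace ℝ (Fin (n+1))) :
    dropLast11 (u - v) = dropLast11 u - dropLast11 v := by
  ext j; simp

lemma fderiv_apply_eq_inner_gradient {E : Type*} [NormedAddCommGroup E] [InnerProductSpace ℝ E]
    [CompleteSpace E] (f : E → ℝ) (x v : E) :
    fderiv ℝ f x v = ⟪gradient f x, v⟫ := by
  have : (InnerProductSpace.toDual ℝ E) (gradient f x) = fderiv ℝ f x := by
    simp [gradient]
  rw [← this]
  rfl

lemma abs_coord_le11 {m : ℕ} (u : EuclideanSpace ℝ (Fin m)) (i : Fin m) : |u i| ≤ ‖u‖ := by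
  have h := abs_real_inner_le_norm u (EuclideanSpace.single i (1:ℝ))
  simpa [EuclideanSpace.inner_single_right] using h

set_option maxHeartbeats 1000000 in
lemma key11 {n : ℕ} {γ : ℝ} (hγ : 0 < γ)
    {Φ : EuclideanSpace ℝ (Fin (n + 1)) → ℝ} {H δ : ℝ} (hH : 0 < H) (hδpos : 0 < δ)
    (hΦ0 : Φ 0 = 0)
    (hΦdiff : ContDiffOn ℝ 1 Φ (ball (0 : EuclideanSpace ℝ (Fin (n + 1))) δ))
    (hgrad0 : ∀ j : Fin n, gradient Φ 0 j.castSucc = 0)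
    (hgradn : gradient Φ 0 (Fin.last n) = ‖gradient Φ 0‖)
    (hpos : 0 < ‖gradient Φ 0‖)
    (hδ : δ ^ γ = ‖gradient Φ 0‖ / (2 * H))
    (hHol : ∀ z ∈ ball (0 : EuclideanSpace ℝ (Fin (n + 1))) δ, Φ z = 0 →
      ∀ w ∈ ball (0 : EuclideanSpace ℝ (Fin (n + 1))) δ, Φ w = 0 →
        ‖gradient Φ z - gradient Φ w‖ ≤ H * ‖z - w‖ ^ γ)
    {φ : EuclideanSpace ℝ (Fin n) → ℝ}
    (hφdiff : ∀ z' : EuclideanSpace ℝ (Fin n), graphPoint11 φ z' ∈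
      ball (0 : EuclideanSpace ℝ (Fin (n + 1))) δ → DifferentiableAt ℝ φ z')
    (hgraph : ∀ y ∈ ball (0 : EuclideanSpace ℝ (Fin (n + 1))) δ,
      (Φ y = 0 ↔ y (Fin.last n) = φ (dropLast11 y)))
    {z' : EuclideanSpace ℝ (Fin n)}
    (hz : graphPoint11 φ z' ∈ ball (0 : EuclideanSpace ℝ (Fin (n + 1))) δ) :
    ‖gradient φ z'‖ ≤ 2 * H / ‖gradient Φ 0‖ * ‖graphPoint11 φ z'‖ ^ γ := by
  set N := ‖gradient Φ 0‖ with hN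
  set z := graphPoint11 φ z' with hzdef
  have hz0 : Φ z = 0 := (hgraph z hz).mpr (by
    rw [hzdef, graphPoint11_eq, last_emb11_add, dropLast11_emb11_add])
  have hΦdAt : ∀ y ∈ ball (0 : EuclideanSpace ℝ (Fin (n + 1))) δ, DifferentiableAt ℝ Φ y :=
    fun y hy => (hΦdiff.differentiableOn one_ne_zero).differentiableAt (isOpen_ball.mem_nhds hy)
  have hHz : ‖gradient Φ z - gradient Φ 0‖ ≤ H * ‖z‖ ^ γ := by
    simpa using hHol z hz hz0 0 (mem_ball_self hδpos) hΦ0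
  have hzδ : ‖z‖ < δ := mem_ball_zero_iff.mp hz
  have hrpow : ‖z‖ ^ γ ≤ δ ^ γ := Real.rpow_le_rpow (norm_nonneg _) hzδ.le hγ.le
  have hHδ : H * δ ^ γ = N / 2 := by
    rw [hδ]; field_simp
  have ha : N / 2 ≤ gradient Φ z (Fin.last n) := by
    have h1 : |gradient Φ z (Fin.last n) - gradient Φ 0 (Fin.last n)| ≤
        ‖gradient Φ z - gradient Φ 0‖ := by
      have := abs_coord_le11 (gradient Φ z - gradient Φ 0) (Fin.last n)
      simpa using this
    have h2 : H * ‖z‖ ^ γ ≤ N / 2 := by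
      calc H * ‖z‖ ^ γ ≤ H * δ ^ γ := by nlinarith
        _ = N / 2 := hHδ
    have := abs_le.mp (h1.trans (hHz.trans h2))
    rw [hgradn] at this
    linarith [this.1]
  -- chain rule
  have hφd : DifferentiableAt ℝ φ z' := hφdiff z' hz
  set sing := EuclideanSpace.single (Fin.last n) (1:ℝ) with hsing
  set DF := (emb11 n : EuclideanSpace ℝ (Fin n) →L[ℝ] EuclideanSpace ℝ (Fin (n+1))) +
      (fderiv ℝ φ z').smulRight sing with hDF
  have hGd : HasFDerivAt (fun w' => graphPoint11 φ w') DF z' := by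
    have heqf : (fun w' => graphPoint11 φ w') =
        fun w' => emb11 n w' + φ w' • sing := funext (graphPoint11_eq φ)
    rw [heqf]
    exact ((emb11 n).hasFDerivAt).add (hφd.hasFDerivAt.smul_const sing)
  have hΦz : DifferentiableAt ℝ Φ z := hΦdAt _ hz
  have hcomp : fderiv ℝ (fun w' => Φ (graphPoint11 φ w')) z' =
      (fderiv ℝ Φ z).comp DF := (hΦz.hasFDerivAt.comp z' hGd).fderiv
  have hev : (fun w' => Φ (graphPoint11 φ w')) =ᶠ[𝓝 z'] fun _ => (0:ℝ) := by
    have hmem : {w' | graphPoint11 φ w' ∈ ball (0 : EuclideanSpace ℝ (Fin (n+1))) δ} ∈ 𝓝 z' :=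
      hGd.continuousAt.preimage_mem_nhds (isOpen_ball.mem_nhds hz)
    filter_upwards [hmem] with w' hw'
    exact (hgraph _ hw').mpr (by rw [graphPoint11_eq, last_emb11_add, dropLast11_emb11_add])
  have h0 : (fderiv ℝ Φ z).comp DF = 0 := by
    rw [← hcomp, hev.fderiv_eq]
    exact fderiv_const_apply 0
  have heq : ∀ v : EuclideanSpace ℝ (Fin n),
      ⟪dropLast11 (gradient Φ z), v⟫ + fderiv ℝ φ z' v * gradient Φ z (Fin.last n) = 0 := by
    intro v
    have h1 : fderiv ℝ Φ z (emb11 n v + fderiv ℝ φ z' v • sing) = 0 := by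
      have := congrArg (fun L : EuclideanSpace ℝ (Fin n) →L[ℝ] ℝ => L v) h0
      simpa [hDF, ContinuousLinearMap.comp_apply] using this
    rw [(fderiv ℝ Φ z).map_add, (fderiv ℝ Φ z).map_smul] at h1
    rw [fderiv_apply_eq_inner_gradient Φ z (emb11 n v),
      fderiv_apply_eq_inner_gradient Φ z sing] at h1
    rw [inner_emb11] at h1
    have h2 : ⟪gradient Φ z, sing⟫ = gradient Φ z (Fin.last n) := by
      rw [hsing, EuclideanSpace.inner_single_right]; simp
    rw [h2, smul_eq_mul] at h1
    linarith [h1]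
  have hdL0 : dropLast11 (gradient Φ 0) = 0 := by
    ext j; simp [hgrad0 j]
  have hkey : ‖gradient φ z'‖ ^ 2 * gradient Φ z (Fin.last n) ≤
      (H * ‖z‖ ^ γ) * ‖gradient φ z'‖ := by
    have h1 := heq (gradient φ z')
    rw [fderiv_apply_eq_inner_gradient φ z' (gradient φ z'),
      real_inner_self_eq_norm_sq] at h1
    have h3 : ⟪dropLast11 (gradient Φ z), gradient φ z'⟫ =
        ⟪dropLast11 (gradient Φ z - gradient Φ 0), gradient φ z'⟫ := by
      rw [dropLast11_sub, hdL0, sub_zero]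
    have h4 : |⟪dropLast11 (gradient Φ z - gradient Φ 0), gradient φ z'⟫| ≤
        (H * ‖z‖ ^ γ) * ‖gradient φ z'‖ := by
      calc |⟪dropLast11 (gradient Φ z - gradient Φ 0), gradient φ z'⟫| ≤
          ‖dropLast11 (gradient Φ z - gradient Φ 0)‖ * ‖gradient φ z'‖ :=
            abs_real_inner_le_norm _ _
        _ ≤ (H * ‖z‖ ^ γ) * ‖gradient φ z'‖ :=
            mul_le_mul_of_nonneg_right
              ((norm_dropLast11_le _).trans hHz) (norm_nonneg _)
    rw [h3] at h1
    have h5 := abs_le.mp h4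
    linarith [h5.1]
  rcases eq_or_lt_of_le (norm_nonneg (gradient φ z')) with h | h
  · rw [← h]
    positivity
  · have hc : ‖gradient φ z'‖ * (N / 2) ≤ H * ‖z‖ ^ γ := by
      nlinarith [hkey, mul_le_mul_of_nonneg_left ha (sq_nonneg ‖gradient φ z'‖), h]
    have hN2 : (0:ℝ) < N / 2 := by linarith
    rw [← le_div_iff₀ hN2] at hc
    calc ‖gradient φ z'‖ ≤ H * ‖z‖ ^ γ / (N / 2) := hc
      _ = 2 * H / N * ‖z‖ ^ γ := by field_simp

set_option maxHeartbeats 1000000 in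
lemma lip11 {n : ℕ} {γ : ℝ} (hγ : 0 < γ)
    {Φ : EuclideanSpace ℝ (Fin (n + 1)) → ℝ} {H δ : ℝ} (hH : 0 < H) (hδpos : 0 < δ)
    (hΦ0 : Φ 0 = 0)
    (hΦdiff : ContDiffOn ℝ 1 Φ (ball (0 : EuclideanSpace ℝ (Fin (n + 1))) δ))
    (hgrad0 : ∀ j : Fin n, gradient Φ 0 j.castSucc = 0)
    (hgradn : gradient Φ 0 (Fin.last n) = ‖gradient Φ 0‖)
    (hpos : 0 < ‖gradient Φ 0‖)
    (hδ : δ ^ γ = ‖gradient Φ 0‖ / (2 * H))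
    (hHol : ∀ z ∈ ball (0 : EuclideanSpace ℝ (Fin (n + 1))) δ, Φ z = 0 →
      ∀ w ∈ ball (0 : EuclideanSpace ℝ (Fin (n + 1))) δ, Φ w = 0 →
        ‖gradient Φ z - gradient Φ w‖ ≤ H * ‖z - w‖ ^ γ)
    {φ : EuclideanSpace ℝ (Fin n) → ℝ} (hφ0 : φ 0 = 0)
    (hφdiff : ∀ z' : EuclideanSpace ℝ (Fin n), graphPoint11 φ z' ∈
      ball (0 : EuclideanSpace ℝ (Fin (n + 1))) δ → DifferentiableAt ℝ φ z')
    (hgraph : ∀ y ∈ ball (0 : EuclideanSpace ℝ (Fin (n + 1))) δ,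
      (Φ y = 0 ↔ y (Fin.last n) = φ (dropLast11 y)))
    {z' : EuclideanSpace ℝ (Fin n)}
    (hr : Real.sqrt 2 * ‖z'‖ < δ) : |φ z'| ≤ ‖z'‖ := by
  set N := ‖gradient Φ 0‖ with hN
  set r := ‖z'‖ with hrdef
  have hr0 : 0 ≤ r := norm_nonneg _
  have hΦdAt : ∀ y ∈ ball (0 : EuclideanSpace ℝ (Fin (n + 1))) δ, DifferentiableAt ℝ Φ y :=
    fun y hy => (hΦdiff.differentiableOn one_ne_zero).differentiableAt (isOpen_ball.mem_nhds hy)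
  -- gradient bound ≤ 1 everywhere on the domain
  have hone : ∀ w' : EuclideanSpace ℝ (Fin n),
      graphPoint11 φ w' ∈ ball (0 : EuclideanSpace ℝ (Fin (n+1))) δ → ‖gradient φ w'‖ ≤ 1 := by
    intro w' hw
    have hk := key11 hγ hH hδpos hΦ0 hΦdiff hgrad0 hgradn hpos hδ hHol hφdiff hgraph hw
    have h1 : ‖graphPoint11 φ w'‖ ^ γ ≤ δ ^ γ :=
      Real.rpow_le_rpow (norm_nonneg _) (mem_ball_zero_iff.mp hw).le hγ.le
    have h2 : 2 * H / N * (δ ^ γ) = 1 := by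
      rw [hδ]; field_simp
    calc ‖gradient φ w'‖ ≤ 2 * H / N * ‖graphPoint11 φ w'‖ ^ γ := hk
      _ ≤ 2 * H / N * δ ^ γ := by
          apply mul_le_mul_of_nonneg_left h1
          positivity
      _ = 1 := h2
  -- graphPoint at 0
  have hgp0 : graphPoint11 φ (0 : EuclideanSpace ℝ (Fin n)) = 0 := by
    ext i
    induction i using Fin.lastCases with
    | last => simp [graphPoint11, PiLp.toLp_apply, hφ0]
    | cast j => simp [graphPoint11, PiLp.toLp_apply]
  -- the set of good times
  set T : Set ℝ := {t | t ∈ Icc (0:ℝ) 1 ∧ ∀ s ∈ Icc (0:ℝ) t,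
      graphPoint11 φ (s • z') ∈ ball (0 : EuclideanSpace ℝ (Fin (n+1))) δ} with hT
  have h0T : (0:ℝ) ∈ T := by
    constructor
    · exact ⟨le_refl 0, zero_le_one⟩
    · intro s hs
      have : s = 0 := le_antisymm hs.2 hs.1
      rw [this, zero_smul, hgp0]
      exact mem_ball_self hδpos
  have hTne : T.Nonempty := ⟨0, h0T⟩
  have hbdd : BddAbove T := ⟨1, fun t ht => ht.1.2⟩
  set m := sSup T with hm
  have hm0 : 0 ≤ m := le_csSup hbdd h0T
  have hm1 : m ≤ 1 := csSup_le hTne (fun t ht => ht.1.2)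
  have hlt : ∀ s : ℝ, 0 ≤ s → s < m →
      graphPoint11 φ (s • z') ∈ ball (0 : EuclideanSpace ℝ (Fin (n+1))) δ := by
    intro s hs hsm
    obtain ⟨t, htT, hst⟩ := exists_lt_of_lt_csSup hTne hsm
    exact htT.2 s ⟨hs, hst.le⟩
  -- MVT estimate
  have hA : ∀ t : ℝ, (∀ s ∈ Icc (0:ℝ) t,
        graphPoint11 φ (s • z') ∈ ball (0 : EuclideanSpace ℝ (Fin (n+1))) δ) →
      ∀ a ∈ Icc (0:ℝ) t, ∀ b ∈ Icc (0:ℝ) t, a ≤ b →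
        |φ (b • z') - φ (a • z')| ≤ r * (b - a) := by
    intro t ht a ha b hb hab
    have hsub : Icc a b ⊆ Icc (0:ℝ) t := Icc_subset_Icc ha.1 hb.2
    have hderiv : ∀ x ∈ Icc a b, HasDerivWithinAt (fun s : ℝ => φ (s • z'))
        (fderiv ℝ φ (x • z') z') (Icc a b) x := by
      intro x hx
      have hder1 : HasDerivAt (fun s : ℝ => s • z') z' x := by
        simpa using (hasDerivAt_id x).smul_const z'
      have hder2 : HasDerivAt (fun s : ℝ => φ (s • z')) (fderiv ℝ φ (x • z') z') x :=
        ((hφdiff _ (ht _ (hsub hx))).hasFDerivAt).comp_hasDerivAt x hder1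
      exact hder2.hasDerivWithinAt
    have hbound : ∀ x ∈ Ico a b, ‖fderiv ℝ φ (x • z') z'‖ ≤ r := by
      intro x hx
      have hmem := ht _ (hsub (Ico_subset_Icc_self hx))
      rw [fderiv_apply_eq_inner_gradient]
      rw [Real.norm_eq_abs]
      calc |⟪gradient φ (x • z'), z'⟫| ≤ ‖gradient φ (x • z')‖ * ‖z'‖ :=
          abs_real_inner_le_norm _ _
        _ ≤ 1 * r := by
            apply mul_le_mul_of_nonneg_right (hone _ hmem) hr0
        _ = r := one_mul r
    have := norm_image_sub_le_of_norm_deriv_le_segment' hderiv hbound b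
      ⟨hab, le_refl b⟩
    simpa [Real.norm_eq_abs] using this
  -- continuity of the graph curve at good points
  have hq : ∀ s : ℝ, graphPoint11 φ (s • z') ∈ ball (0 : EuclideanSpace ℝ (Fin (n+1))) δ →
      ContinuousAt (fun u : ℝ => graphPoint11 φ (u • z')) s := by
    intro s hs
    have h1 : ContinuousAt (fun u : ℝ => u • z') s :=
      (continuous_id.smul continuous_const).continuousAt
    have h2 : ContinuousAt φ (s • z') := (hφdiff _ hs).continuousAt
    have h4 : ContinuousAt (fun u : ℝ => φ (u • z')) s :=
      ContinuousAt.comp (f := fun u : ℝ => u • z') h2 h1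
    have h5 : ContinuousAt (fun u : ℝ => emb11 n (u • z')) s :=
      ContinuousAt.comp (f := fun u : ℝ => u • z') ((emb11 n).continuous.continuousAt) h1
    have h3 : ContinuousAt (fun u : ℝ => emb11 n (u • z') +
        φ (u • z') • EuclideanSpace.single (Fin.last n) (1:ℝ)) s :=
      h5.add (h4.smul continuousAt_const)
    have heqf : (fun u : ℝ => graphPoint11 φ (u • z')) = fun u : ℝ => emb11 n (u • z') +
        φ (u • z') • EuclideanSpace.single (Fin.last n) (1:ℝ) :=
      funext fun u => graphPoint11_eq φ (u • z')
    rw [heqf]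
    exact h3
  -- the endpoint m is good
  have hmT : ∀ s ∈ Icc (0:ℝ) m,
      graphPoint11 φ (s • z') ∈ ball (0 : EuclideanSpace ℝ (Fin (n+1))) δ := by
    intro s hs
    rcases lt_or_eq_of_le hs.2 with hcase | hcase
    · exact hlt s hs.1 hcase
    rw [hcase]
    rcases eq_or_lt_of_le hm0 with hm00 | hmpos
    · rw [← hm00, zero_smul, hgp0]; exact mem_ball_self hδpos
    set u : ℕ → ℝ := fun k => m - m / (k + 2) with hu
    have hu0 : ∀ k : ℕ, 0 ≤ u k := by
      intro k
      have h1 : m / (k + 2) ≤ m / 1 := by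
        apply div_le_div_of_nonneg_left hm0 one_pos
        · have : (0:ℝ) ≤ (k:ℝ) := Nat.cast_nonneg k
          linarith
      simp only [hu, div_one] at *
      linarith
    have hum : ∀ k : ℕ, u k < m := by
      intro k
      have h1 : 0 < m / (k + 2) := by
        apply div_pos hmpos
        have : (0:ℝ) ≤ (k:ℝ) := Nat.cast_nonneg k
        linarith
      simp only [hu]
      linarith
    have humem : ∀ k : ℕ, graphPoint11 φ (u k • z') ∈
        ball (0 : EuclideanSpace ℝ (Fin (n+1))) δ := fun k => hlt _ (hu0 k) (hum k)
    have hdenom : Tendsto (fun k : ℕ => (k:ℝ) + 2) atTop atTop :=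
      tendsto_atTop_add_const_right atTop 2 tendsto_natCast_atTop_atTop
    have hulim : Tendsto u atTop (𝓝 m) := by
      have h1 : Tendsto (fun k : ℕ => m / ((k:ℝ) + 2)) atTop (𝓝 0) :=
        Tendsto.div_atTop tendsto_const_nhds hdenom
      have h2 := (tendsto_const_nhds (x := m) (f := atTop (α := ℕ))).sub h1
      simpa using h2
    have humono : Monotone u := by
      intro i j hij
      simp only [hu]
      have h1 : ((i:ℝ) + 2) ≤ ((j:ℝ) + 2) := by
        have : (i:ℝ) ≤ (j:ℝ) := Nat.cast_le.mpr hij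
        linarith
      have h2 : m / ((j:ℝ) + 2) ≤ m / ((i:ℝ) + 2) := by
        apply div_le_div_of_nonneg_left hm0 _ h1
        have : (0:ℝ) ≤ (i:ℝ) := Nat.cast_nonneg i
        linarith
      linarith
    set ψ : ℝ → ℝ := fun s => φ (s • z') with hψ
    have hLip : ∀ a b : ℝ, 0 ≤ a → a ≤ b → b < m → |ψ b - ψ a| ≤ r * (b - a) := by
      intro a b ha hab hbm
      exact hA b (fun s hs' => hlt s hs'.1 (lt_of_le_of_lt hs'.2 hbm)) a ⟨ha, hab⟩ b
        ⟨le_trans ha hab, le_refl b⟩ hab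
    have hcauchy : CauchySeq (fun k => ψ (u k)) := by
      apply cauchySeq_of_le_tendsto_0 (fun N : ℕ => r * (m / ((N:ℝ) + 2)))
      · intro p q N hp hq
        rw [Real.dist_eq]
        have hbnd : ∀ i j : ℕ, N ≤ i → N ≤ j → u i ≤ u j →
            |ψ (u i) - ψ (u j)| ≤ r * (m / ((N:ℝ) + 2)) := by
          intro i j hi hj hij
          have h1 := hLip (u i) (u j) (hu0 i) hij (hum j)
          have h2 : u j - u i ≤ m / ((N:ℝ) + 2) := by
            have h3 : u N ≤ u i := humono hi
            have h4 := hum j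
            simp only [hu] at h3 h4 ⊢
            linarith
          have h5 : r * (u j - u i) ≤ r * (m / ((N:ℝ)+2)) := mul_le_mul_of_nonneg_left h2 hr0
          calc |ψ (u i) - ψ (u j)| = |ψ (u j) - ψ (u i)| := abs_sub_comm _ _
            _ ≤ r * (u j - u i) := h1
            _ ≤ _ := h5
        rcases le_total (u p) (u q) with hle | hle
        · exact hbnd p q hp hq hle
        · rw [abs_sub_comm]; exact hbnd q p hq hp hle
      · have h1 : Tendsto (fun N : ℕ => m / ((N:ℝ) + 2)) atTop (𝓝 0) :=
          Tendsto.div_atTop tendsto_const_nhds hdenom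
        have h2 := h1.const_mul r
        simpa using h2
    obtain ⟨c, hc⟩ := cauchySeq_tendsto_of_complete hcauchy
    have hcb : |c| ≤ r * m := by
      apply le_of_tendsto hc.abs
      apply Filter.Eventually.of_forall
      intro k
      have h1 := hLip 0 (u k) (le_refl 0) (hu0 k) (hum k)
      have h2 : ψ 0 = 0 := by simp only [hψ, zero_smul]; exact hφ0
      rw [h2, sub_zero] at h1
      have h3 : r * (u k - 0) ≤ r * m := by
        have hx1 := (hum k).le
        apply mul_le_mul_of_nonneg_left _ hr0
        linarith
      calc |ψ (u k)| ≤ r * (u k - 0) := h1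
        _ ≤ r * m := h3
    set y : EuclideanSpace ℝ (Fin (n+1)) :=
      emb11 n (m • z') + c • EuclideanSpace.single (Fin.last n) (1:ℝ) with hy'
    have hy : y ∈ ball (0 : EuclideanSpace ℝ (Fin (n+1))) δ := by
      rw [mem_ball_zero_iff]
      have h1 : ‖y‖ ^ 2 = ‖m • z'‖ ^ 2 + c ^ 2 := norm_sq_emb11_add (m • z') c
      have h2 : ‖m • z'‖ = m * r := by
        rw [norm_smul, Real.norm_eq_abs, abs_of_nonneg hm0]
      have h3 : c ^ 2 ≤ (r * m) ^ 2 := by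
        rw [← sq_abs c]
        apply pow_le_pow_left₀ (abs_nonneg c) hcb
      have h4 : (Real.sqrt 2 * r) ^ 2 = 2 * r ^ 2 := by
        rw [mul_pow, Real.sq_sqrt (by norm_num : (0:ℝ) ≤ 2)]
      have h5 : (Real.sqrt 2 * r) ^ 2 < δ ^ 2 := by
        apply pow_lt_pow_left₀ hr _ (by norm_num)
        positivity
      have h6 : ‖y‖ ^ 2 < δ ^ 2 := by
        rw [h1, h2]
        have hmr : m * r ≤ r := by nlinarith [hm1, hr0, hm0]
        nlinarith [h3, h4, h5, hmr, mul_nonneg hm0 hr0]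
      exact lt_of_pow_lt_pow_left₀ 2 hδpos.le h6
    have hΦy : Φ y = 0 := by
      have h1 : Tendsto (fun k => u k • z') atTop (𝓝 (m • z')) := hulim.smul_const z'
      have h2 : Tendsto (fun k => emb11 n (u k • z')) atTop (𝓝 (emb11 n (m • z'))) :=
        ((emb11 n).continuous.tendsto _).comp h1
      have h3 : Tendsto (fun k => ψ (u k) • EuclideanSpace.single (Fin.last n) (1:ℝ))
          atTop (𝓝 (c • EuclideanSpace.single (Fin.last n) (1:ℝ))) := hc.smul_const _
      have htend : Tendsto (fun k => graphPoint11 φ (u k • z')) atTop (𝓝 y) := by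
        have h4 := h2.add h3
        have heqf : (fun k => graphPoint11 φ (u k • z')) = fun k => emb11 n (u k • z') +
            ψ (u k) • EuclideanSpace.single (Fin.last n) (1:ℝ) :=
          funext fun k => graphPoint11_eq φ (u k • z')
        rw [heqf]
        exact h4
      have hzero : ∀ k : ℕ, Φ (graphPoint11 φ (u k • z')) = 0 := fun k =>
        (hgraph _ (humem k)).mpr
          (by rw [graphPoint11_eq, last_emb11_add, dropLast11_emb11_add])
      have h5 : Tendsto (fun k => Φ (graphPoint11 φ (u k • z'))) atTop (𝓝 (Φ y)) :=
        ((hΦdAt y hy).continuousAt).tendsto.comp htend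
      have h6 : Tendsto (fun k => Φ (graphPoint11 φ (u k • z'))) atTop (𝓝 0) := by
        simp only [hzero]
        exact tendsto_const_nhds
      exact tendsto_nhds_unique h5 h6
    have hcphi : c = φ (m • z') := by
      have := (hgraph y hy).mp hΦy
      rwa [hy', last_emb11_add, dropLast11_emb11_add] at this
    rw [graphPoint11_eq, ← hcphi]
    exact hy
  -- m = 1
  have hm1' : m = 1 := by
    by_contra hne
    have hmlt : m < 1 := lt_of_le_of_ne hm1 hne
    have hmem := hmT m ⟨hm0, le_refl m⟩
    have hcont := hq m hmem
    have hev : ∀ᶠ s in 𝓝 m, graphPoint11 φ (s • z') ∈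
        ball (0 : EuclideanSpace ℝ (Fin (n+1))) δ :=
      hcont.preimage_mem_nhds (isOpen_ball.mem_nhds hmem)
    obtain ⟨ε, hε, hball⟩ := Metric.eventually_nhds_iff.mp hev
    set t := min 1 (m + ε/2) with htdef
    have htm : m < t := lt_min hmlt (by linarith)
    have htT : t ∈ T := by
      refine ⟨⟨le_trans hm0 htm.le, min_le_left _ _⟩, ?_⟩
      intro s hs
      rcases le_or_gt s m with hsm | hsm
      · exact hmT s ⟨hs.1, hsm⟩
      · apply hball
        rw [Real.dist_eq, abs_of_pos (by linarith : (0:ℝ) < s - m)]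
        have h1 : s ≤ m + ε/2 := le_trans hs.2 (min_le_right _ _)
        linarith
    have := le_csSup hbdd htT
    linarith
  -- conclude
  have h1 := hA 1 (by rw [← hm1']; exact hmT) 0 ⟨le_refl 0, zero_le_one⟩ 1 ⟨zero_le_one, le_refl 1⟩
    zero_le_one
  simpa [hφ0] using h1


set_option maxHeartbeats 1000000 in
/-- Implicit-function gradient bound: if `Φ(0)=0`, `∇Φ(0)` points in the `e_n` direction,
`δ^γ = |∇Φ(0)|/(2H)` with `H` a Hölder-`γ` bound of `∇Φ` on the zero set in `B(0,δ)`, and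
the zero set of `Φ` in `B(0,δ)` is the graph `y_n = φ(y')`, then
`|∇φ(z')| ≤ (2^{1+γ/2} H / |∇Φ(0)|) |z'|^γ` whenever `(z', φ z') ∈ B(0,δ)`. -/
theorem stmt_11 (n : ℕ) (γ : ℝ) (hγ : 0 < γ) (hγ1 : γ < 1)
    (Φ : EuclideanSpace ℝ (Fin (n + 1)) → ℝ) (H δ : ℝ) (hH : 0 < H) (hδpos : 0 < δ)
    (hΦ0 : Φ 0 = 0)
    (hΦdiff : ContDiffOn ℝ 1 Φ (ball (0 : EuclideanSpace ℝ (Fin (n + 1))) δ))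
    (hgrad0 : ∀ j : Fin n, gradient Φ 0 j.castSucc = 0)
    (hgradn : gradient Φ 0 (Fin.last n) = ‖gradient Φ 0‖)
    (hpos : 0 < ‖gradient Φ 0‖)
    (hδ : δ ^ γ = ‖gradient Φ 0‖ / (2 * H))
    (hHol : ∀ z ∈ ball (0 : EuclideanSpace ℝ (Fin (n + 1))) δ, Φ z = 0 →
      ∀ w ∈ ball (0 : EuclideanSpace ℝ (Fin (n + 1))) δ, Φ w = 0 →
        ‖gradient Φ z - gradient Φ w‖ ≤ H * ‖z - w‖ ^ γ)
    (φ : EuclideanSpace ℝ (Fin n) → ℝ) (hφ0 : φ 0 = 0)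
    (hφdiff : ∀ z' : EuclideanSpace ℝ (Fin n), graphPoint11 φ z' ∈
      ball (0 : EuclideanSpace ℝ (Fin (n + 1))) δ → DifferentiableAt ℝ φ z')
    (hgraph : ∀ y ∈ ball (0 : EuclideanSpace ℝ (Fin (n + 1))) δ,
      (Φ y = 0 ↔ y (Fin.last n) = φ (dropLast11 y))) :
    ∀ z' : EuclideanSpace ℝ (Fin n),
      graphPoint11 φ z' ∈ ball (0 : EuclideanSpace ℝ (Fin (n + 1))) δ →
      ‖gradient φ z'‖ ≤ 2 ^ (1 + γ / 2) * H / ‖gradient Φ 0‖ * ‖z'‖ ^ γ := by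
  intro z' hz
  set N := ‖gradient Φ 0‖ with hN
  have hk := key11 hγ hH hδpos hΦ0 hΦdiff hgrad0 hgradn hpos hδ hHol hφdiff hgraph hz
  have hKpos : (0:ℝ) ≤ 2 * H / N := by positivity
  have hsq : (Real.sqrt 2 : ℝ) ^ γ = (2:ℝ) ^ (γ/2) := by
    rw [Real.sqrt_eq_rpow, ← Real.rpow_mul (by norm_num : (0:ℝ) ≤ 2)]
    ring_nf
  have hconst : (2:ℝ) ^ (1 + γ / 2) * H / N * ‖z'‖ ^ γ =
      2 * H / N * ((Real.sqrt 2 * ‖z'‖) ^ γ) := by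
    rw [Real.mul_rpow (Real.sqrt_nonneg 2) (norm_nonneg z'), hsq,
      Real.rpow_add (by norm_num : (0:ℝ) < 2), Real.rpow_one]
    ring
  rcases lt_or_ge (Real.sqrt 2 * ‖z'‖) δ with hcase | hcase
  · have hlip := lip11 hγ hH hδpos hΦ0 hΦdiff hgrad0 hgradn hpos hδ hHol hφ0 hφdiff
      hgraph hcase
    have hgp : ‖graphPoint11 φ z'‖ ≤ Real.sqrt 2 * ‖z'‖ := by
      have h1 : ‖graphPoint11 φ z'‖ ^ 2 = ‖z'‖ ^ 2 + (φ z') ^ 2 := by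
        rw [graphPoint11_eq]; exact norm_sq_emb11_add z' (φ z')
      apply le_of_pow_le_pow_left₀ (by norm_num : (2:ℕ) ≠ 0) (by positivity)
      rw [h1, mul_pow, Real.sq_sqrt (by norm_num : (0:ℝ) ≤ 2)]
      nlinarith [hlip, abs_nonneg (φ z'), norm_nonneg z', sq_abs (φ z')]
    calc ‖gradient φ z'‖ ≤ 2 * H / N * ‖graphPoint11 φ z'‖ ^ γ := hk
      _ ≤ 2 * H / N * (Real.sqrt 2 * ‖z'‖) ^ γ :=
          mul_le_mul_of_nonneg_left (Real.rpow_le_rpow (norm_nonneg _) hgp hγ.le) hKpos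
      _ = _ := hconst.symm
  · calc ‖gradient φ z'‖ ≤ 2 * H / N * ‖graphPoint11 φ z'‖ ^ γ := hk
      _ ≤ 2 * H / N * (Real.sqrt 2 * ‖z'‖) ^ γ := by
          apply mul_le_mul_of_nonneg_left _ hKpos
          apply Real.rpow_le_rpow (norm_nonneg _) _ hγ.le
          exact le_trans (mem_ball_zero_iff.mp hz).le hcase
      _ = _ := hconst.symm
end

section
/- Conserved quantity for the tilted-ellipse system: with (a, b, θ) solving a' = (2/(a₀+b₀)) ab cos(2θ), b' = −(2/(a₀+b₀)) ab cos(2θ), θ' = −(2/(a₀+b₀)) (ab/(a−b)) sin(2θ) on an interval where a ≠ b, the function (a(t) − b(t))·sin(2θ(t)) is constant: (a(t)−b(t)) sin(2θ(t)) = (a₀−b₀) sin(2θ₀) for all t. -/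
open Set Filter Topology

/-- Conserved quantity for the tilted-ellipse system: `(a(t) − b(t)) sin(2θ(t))` is
constant on an interval where `a ≠ b`. -/
theorem stmt_15 (a b θ : ℝ → ℝ) (a₀ b₀ θ₀ : ℝ) (ha₀ : 0 < a₀) (hb₀ : 0 < b₀)
    (hne : a₀ ≠ b₀) (hθ₀ : θ₀ ∈ Ioo (0 : ℝ) (Real.pi / 2))
    (I : Set ℝ) (hI : Convex ℝ I) (h0 : (0 : ℝ) ∈ I)
    (hia : a 0 = a₀) (hib : b 0 = b₀) (hiθ : θ 0 = θ₀)
    (hab : ∀ t ∈ I, a t ≠ b t)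
    (hda : ∀ t ∈ I, HasDerivAt a (2 / (a₀ + b₀) * a t * b t * Real.cos (2 * θ t)) t)
    (hdb : ∀ t ∈ I, HasDerivAt b (-(2 / (a₀ + b₀) * a t * b t * Real.cos (2 * θ t))) t)
    (hdθ : ∀ t ∈ I, HasDerivAt θ
      (-(2 / (a₀ + b₀) * (a t * b t / (a t - b t)) * Real.sin (2 * θ t))) t) :
    ∀ t ∈ I, (a t - b t) * Real.sin (2 * θ t) = (a₀ - b₀) * Real.sin (2 * θ₀) := by
  set f : ℝ → ℝ := fun t => (a t - b t) * Real.sin (2 * θ t) with hf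
  have key : ∀ t ∈ I, HasDerivWithinAt f 0 I t := by
    intro t ht
    have h1 : HasDerivAt (fun t => 2 * θ t) (2 * -(2 / (a₀ + b₀) * (a t * b t / (a t - b t)) * Real.sin (2 * θ t))) t := (hdθ t ht).const_mul 2
    have h2 : HasDerivAt (fun t => Real.sin (2 * θ t))
        (Real.cos (2 * θ t) * (2 * -(2 / (a₀ + b₀) * (a t * b t / (a t - b t)) * Real.sin (2 * θ t)))) t :=
      h1.sin
    have h3 := (((hda t ht).sub (hdb t ht)).mul h2)
    have heq : (2 / (a₀ + b₀) * a t * b t * Real.cos (2 * θ t) -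
          -(2 / (a₀ + b₀) * a t * b t * Real.cos (2 * θ t))) * Real.sin (2 * θ t) +
        (a t - b t) * (Real.cos (2 * θ t) * (2 * -(2 / (a₀ + b₀) * (a t * b t / (a t - b t)) * Real.sin (2 * θ t)))) = 0 := by
      have hne' : a t - b t ≠ 0 := sub_ne_zero.mpr (hab t ht)
      field_simp
      ring
    rw [Pi.sub_apply, heq] at h3
    exact h3.hasDerivWithinAt
  intro t ht
  have := hI.norm_image_sub_le_of_norm_hasDerivWithin_le (C := 0) key (fun x _ => by simp) h0 ht
  have h4 : f t = f 0 := by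
    have : ‖f t - f 0‖ ≤ 0 := by simpa using this
    have := norm_le_zero_iff.mp this
    linarith [sub_eq_zero.mp this]
  simpa [hf, hia, hib, hiθ] using h4
end

section
/- Explicit solution for axis-aligned elliptical Cauchy patches: the functions a(t) = a₀(a₀+b₀)e^{2t}/(b₀ + a₀ e^{2t}) and b(t) = b₀(a₀+b₀)/(b₀ + a₀ e^{2t}) solve a' = 2ab/(a+b), b' = −2ab/(a+b) with a(0) = a₀, b(0) = b₀ (a₀, b₀ > 0), satisfy a(t)+b(t) = a₀+b₀ for all t ∈ ℝ, and have limits a(t) → a₀+b₀, b(t) → 0 as t → +∞, and a(t) → 0, b(t) → a₀+b₀ as t → −∞. -/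
open Set Filter Topology

/-- Explicit solution for axis-aligned elliptical Cauchy patches:
`a(t) = a₀(a₀+b₀)e^{2t}/(b₀ + a₀e^{2t})`, `b(t) = b₀(a₀+b₀)/(b₀ + a₀e^{2t})` solve
`a' = 2ab/(a+b)`, `b' = −2ab/(a+b)` with `a(0)=a₀`, `b(0)=b₀`, conserve `a+b`, and
collapse as `t → ±∞`. -/
theorem stmt_16 (a₀ b₀ : ℝ) (ha₀ : 0 < a₀) (hb₀ : 0 < b₀) (a b : ℝ → ℝ)
    (ha : ∀ t, a t = a₀ * (a₀ + b₀) * Real.exp (2 * t) / (b₀ + a₀ * Real.exp (2 * t)))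
    (hb : ∀ t, b t = b₀ * (a₀ + b₀) / (b₀ + a₀ * Real.exp (2 * t))) :
    (∀ t, HasDerivAt a (2 * a t * b t / (a t + b t)) t) ∧
    (∀ t, HasDerivAt b (-(2 * a t * b t / (a t + b t))) t) ∧
    a 0 = a₀ ∧ b 0 = b₀ ∧
    (∀ t, a t + b t = a₀ + b₀) ∧
    Tendsto a atTop (𝓝 (a₀ + b₀)) ∧ Tendsto b atTop (𝓝 0) ∧
    Tendsto a atBot (𝓝 0) ∧ Tendsto b atBot (𝓝 (a₀ + b₀)) := by
  have hD : ∀ t : ℝ, 0 < b₀ + a₀ * Real.exp (2 * t) := fun t =>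
    add_pos hb₀ (mul_pos ha₀ (Real.exp_pos _))
  have hDne : ∀ t : ℝ, b₀ + a₀ * Real.exp (2 * t) ≠ 0 := fun t => (hD t).ne'
  have hab : 0 < a₀ + b₀ := add_pos ha₀ hb₀
  -- derivative of the exponential E(t) = exp (2 t)
  have hE : ∀ t : ℝ, HasDerivAt (fun t => Real.exp (2 * t)) (2 * Real.exp (2 * t)) t := by
    intro t
    have h2 : HasDerivAt (fun t : ℝ => 2 * t) 2 t := by
      simpa using (hasDerivAt_id t).const_mul 2
    simpa [Function.comp_def, mul_comm] using (Real.hasDerivAt_exp (2 * t)).comp t h2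
  have hDeriv : ∀ t : ℝ,
      HasDerivAt (fun t => b₀ + a₀ * Real.exp (2 * t)) (a₀ * (2 * Real.exp (2 * t))) t := by
    intro t
    have h := (hasDerivAt_const t b₀).add ((hE t).const_mul a₀)
    rw [zero_add] at h
    exact h
  -- value of 2ab/(a+b)
  have hval : ∀ t : ℝ, 2 * a t * b t / (a t + b t) =
      2 * a₀ * b₀ * (a₀ + b₀) * Real.exp (2 * t) / (b₀ + a₀ * Real.exp (2 * t)) ^ 2 := by
    intro t
    rw [ha, hb]
    have h1 := hDne t
    have h2 := hab.ne'
    have hsum : a₀ * (a₀ + b₀) * Real.exp (2 * t) / (b₀ + a₀ * Real.exp (2 * t)) +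
        b₀ * (a₀ + b₀) / (b₀ + a₀ * Real.exp (2 * t)) = a₀ + b₀ := by
      field_simp
      ring
    rw [hsum]
    field_simp
  have hconserve : ∀ t : ℝ, a t + b t = a₀ + b₀ := by
    intro t
    rw [ha, hb]
    field_simp
    ring
  have hda : ∀ t, HasDerivAt a (2 * a t * b t / (a t + b t)) t := by
    intro t
    have hnum : HasDerivAt (fun t => a₀ * (a₀ + b₀) * Real.exp (2 * t))
        (a₀ * (a₀ + b₀) * (2 * Real.exp (2 * t))) t := (hE t).const_mul _
    have := hnum.div (hDeriv t) (hDne t)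
    have heq : (fun t => a₀ * (a₀ + b₀) * Real.exp (2 * t) / (b₀ + a₀ * Real.exp (2 * t))) = a :=
      funext fun t => (ha t).symm
    rw [show ((fun t => a₀ * (a₀ + b₀) * Real.exp (2 * t)) / fun t => b₀ + a₀ * Real.exp (2 * t)) = a from heq] at this
    refine this.congr_deriv ?_
    rw [hval t]
    field_simp
    ring
  have hdb : ∀ t, HasDerivAt b (-(2 * a t * b t / (a t + b t))) t := by
    intro t
    have hnum : HasDerivAt (fun _ : ℝ => b₀ * (a₀ + b₀)) 0 t := hasDerivAt_const _ _
    have := hnum.div (hDeriv t) (hDne t)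
    have heq : (fun t => b₀ * (a₀ + b₀) / (b₀ + a₀ * Real.exp (2 * t))) = b :=
      funext fun t => (hb t).symm
    rw [show ((fun _ : ℝ => b₀ * (a₀ + b₀)) / fun t => b₀ + a₀ * Real.exp (2 * t)) = b from heq] at this
    refine this.congr_deriv ?_
    rw [hval t]
    field_simp
    ring
  have ha0 : a 0 = a₀ := by
    rw [ha]; rw [mul_zero, Real.exp_zero, mul_one, mul_one]
    rw [add_comm b₀ a₀]; field_simp
  have hb0 : b 0 = b₀ := by
    rw [hb]; rw [mul_zero, Real.exp_zero, mul_one]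
    rw [add_comm b₀ a₀]; field_simp
  -- limits
  have hbtop : Tendsto b atTop (𝓝 0) := by
    have hDtop : Tendsto (fun t => b₀ + a₀ * Real.exp (2 * t)) atTop atTop := by
      apply tendsto_atTop_add_const_left
      apply Tendsto.const_mul_atTop ha₀
      exact Real.tendsto_exp_atTop.comp (tendsto_id.const_mul_atTop (by norm_num : (0:ℝ) < 2))
    have : Tendsto (fun t => b₀ * (a₀ + b₀) / (b₀ + a₀ * Real.exp (2 * t))) atTop (𝓝 0) :=
      Tendsto.div_atTop tendsto_const_nhds hDtop
    have heq : (fun t => b₀ * (a₀ + b₀) / (b₀ + a₀ * Real.exp (2 * t))) = b :=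
      funext fun t => (hb t).symm
    rwa [heq] at this
  have hatop : Tendsto a atTop (𝓝 (a₀ + b₀)) := by
    have : Tendsto (fun t => (a₀ + b₀) - b t) atTop (𝓝 ((a₀ + b₀) - 0)) :=
      tendsto_const_nhds.sub hbtop
    have heq : (fun t => (a₀ + b₀) - b t) = a := funext fun t => by
      have := hconserve t; linarith
    rw [heq] at this
    simpa using this
  have hbbot : Tendsto b atBot (𝓝 (a₀ + b₀)) := by
    have hEbot : Tendsto (fun t : ℝ => Real.exp (2 * t)) atBot (𝓝 0) :=
      Real.tendsto_exp_atBot.comp (tendsto_id.const_mul_atBot (by norm_num : (0:ℝ) < 2))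
    have hDbot : Tendsto (fun t => b₀ + a₀ * Real.exp (2 * t)) atBot (𝓝 b₀) := by
      simpa using (tendsto_const_nhds (x := b₀)).add (hEbot.const_mul a₀)
    have : Tendsto (fun t => b₀ * (a₀ + b₀) / (b₀ + a₀ * Real.exp (2 * t))) atBot
        (𝓝 (b₀ * (a₀ + b₀) / b₀)) := tendsto_const_nhds.div hDbot hb₀.ne'
    have heq : (fun t => b₀ * (a₀ + b₀) / (b₀ + a₀ * Real.exp (2 * t))) = b :=
      funext fun t => (hb t).symm
    rw [heq] at this
    have hv : b₀ * (a₀ + b₀) / b₀ = a₀ + b₀ := by field_simp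
    rwa [hv] at this
  have habot : Tendsto a atBot (𝓝 0) := by
    have : Tendsto (fun t => (a₀ + b₀) - b t) atBot (𝓝 ((a₀ + b₀) - (a₀ + b₀))) :=
      tendsto_const_nhds.sub hbbot
    have heq : (fun t => (a₀ + b₀) - b t) = a := funext fun t => by
      have := hconserve t; linarith
    rw [heq] at this
    simpa using this
  exact ⟨hda, hdb, ha0, hb0, hconserve, hatop, hbtop, habot, hbbot⟩
end

section
/- Global existence for the tilted-ellipse system: for any initial data (a₀, b₀, θ₀) in Ω = {(a,b,θ) : a > 0, b > 0, a ≠ b, 0 < θ < π/2}, the solution of a' = (2/(a₀+b₀)) ab cos(2θ), b' = −(2/(a₀+b₀)) ab cos(2θ), θ' = −(2/(a₀+b₀))(ab/(a−b)) sin(2θ) stays in Ω and is defined for all t ∈ ℝ. In particular, on [−T, T] one has a₀e^{−2T} ≤ a(t) ≤ a₀e^{2T} and b₀e^{−2T} ≤ b(t) ≤ b₀e^{2T}, θ(t) is strictly monotone, and θ(t) never reaches 0 or π/2, nor does a(t) = b(t) occur. -/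
open Set Filter Topology

set_option maxHeartbeats 8000000

private lemma gronwall_aux (f f' : ℝ → ℝ) (hd : ∀ t, HasDerivAt f (f' t) t)
    (hpos : ∀ t, 0 < f t)
    (hb : ∀ t, f' t + (-2) * f t ≤ 0 ∧ 0 ≤ f' t + 2 * f t) :
    ∀ T : ℝ, 0 ≤ T → ∀ t ∈ Set.Icc (-T) T,
      f 0 * Real.exp (-2 * T) ≤ f t ∧ f t ≤ f 0 * Real.exp (2 * T) := by
  have hg : ∀ c : ℝ, ∀ t : ℝ,
      HasDerivAt (fun t => f t * Real.exp (c * t)) ((f' t + c * f t) * Real.exp (c * t)) t := by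
    intro c t
    have h1 : HasDerivAt (fun t : ℝ => Real.exp (c * t)) (Real.exp (c * t) * c) t := by
      simpa using ((hasDerivAt_id t).const_mul c).exp
    have h2 := (hd t).mul h1
    refine h2.congr_deriv ?_
    ring
  have hanti : Antitone (fun t => f t * Real.exp ((-2) * t)) := by
    apply antitone_of_deriv_nonpos
    · exact fun t => (hg (-2) t).differentiableAt
    · intro t
      rw [(hg (-2) t).deriv]
      have h1 := (hb t).1
      have h2 := (Real.exp_pos ((-2) * t)).le
      exact mul_nonpos_of_nonpos_of_nonneg h1 h2
  have hmono : Monotone (fun t => f t * Real.exp (2 * t)) := by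
    apply monotone_of_deriv_nonneg
    · exact fun t => (hg 2 t).differentiableAt
    · intro t
      rw [(hg 2 t).deriv]
      exact mul_nonneg (hb t).2 (Real.exp_pos _).le
  intro T hT t ht
  obtain ⟨ht1, ht2⟩ := ht
  constructor
  · rcases le_total t 0 with h | h
    · have h3 : f 0 ≤ f t * Real.exp ((-2) * t) := by simpa using hanti h
      calc f 0 * Real.exp (-2 * T)
          ≤ (f t * Real.exp ((-2) * t)) * Real.exp (-2 * T) :=
            mul_le_mul_of_nonneg_right h3 (Real.exp_pos _).le
        _ ≤ f t := by
            rw [mul_assoc, ← Real.exp_add]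
            nth_rewrite 2 [show f t = f t * 1 by ring]
            apply mul_le_mul_of_nonneg_left _ (hpos t).le
            rw [show (1:ℝ) = Real.exp 0 by simp]
            exact Real.exp_le_exp.mpr (by linarith)
    · have h3 : f 0 ≤ f t * Real.exp (2 * t) := by simpa using hmono h
      calc f 0 * Real.exp (-2 * T)
          ≤ (f t * Real.exp (2 * t)) * Real.exp (-2 * T) :=
            mul_le_mul_of_nonneg_right h3 (Real.exp_pos _).le
        _ ≤ f t := by
            rw [mul_assoc, ← Real.exp_add]
            nth_rewrite 2 [show f t = f t * 1 by ring]
            apply mul_le_mul_of_nonneg_left _ (hpos t).le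
            rw [show (1:ℝ) = Real.exp 0 by simp]
            exact Real.exp_le_exp.mpr (by linarith)
  · rcases le_total t 0 with h | h
    · have h3 : f t * Real.exp (2 * t) ≤ f 0 := by simpa using hmono h
      calc f t = (f t * Real.exp (2 * t)) * Real.exp (-(2 * t)) := by
            rw [mul_assoc, ← Real.exp_add]; simp
        _ ≤ f 0 * Real.exp (-(2 * t)) :=
            mul_le_mul_of_nonneg_right h3 (Real.exp_pos _).le
        _ ≤ f 0 * Real.exp (2 * T) :=
            mul_le_mul_of_nonneg_left (Real.exp_le_exp.mpr (by linarith)) (hpos 0).le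
    · have h3 : f t * Real.exp ((-2) * t) ≤ f 0 := by simpa using hanti h
      calc f t = (f t * Real.exp ((-2) * t)) * Real.exp (2 * t) := by
            rw [mul_assoc, ← Real.exp_add]; simp
        _ ≤ f 0 * Real.exp (2 * t) :=
            mul_le_mul_of_nonneg_right h3 (Real.exp_pos _).le
        _ ≤ f 0 * Real.exp (2 * T) :=
            mul_le_mul_of_nonneg_left (Real.exp_le_exp.mpr (by linarith)) (hpos 0).le

/-- Global existence for the tilted-ellipse system: for initial data in
`Ω = {a > 0, b > 0, a ≠ b, 0 < θ < π/2}` there is a global solution which stays in `Ω`,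
satisfies `a₀e^{−2T} ≤ a(t) ≤ a₀e^{2T}` and `b₀e^{−2T} ≤ b(t) ≤ b₀e^{2T}` on `[−T, T]`,
and whose angle `θ` is strictly monotone. -/
theorem stmt_17 (a₀ b₀ θ₀ : ℝ) (ha₀ : 0 < a₀) (hb₀ : 0 < b₀) (hne : a₀ ≠ b₀)
    (hθ₀ : θ₀ ∈ Ioo (0 : ℝ) (Real.pi / 2)) :
    ∃ a b θ : ℝ → ℝ,
      a 0 = a₀ ∧ b 0 = b₀ ∧ θ 0 = θ₀ ∧
      (∀ t, HasDerivAt a (2 / (a₀ + b₀) * a t * b t * Real.cos (2 * θ t)) t) ∧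
      (∀ t, HasDerivAt b (-(2 / (a₀ + b₀) * a t * b t * Real.cos (2 * θ t))) t) ∧
      (∀ t, HasDerivAt θ
        (-(2 / (a₀ + b₀) * (a t * b t / (a t - b t)) * Real.sin (2 * θ t))) t) ∧
      (∀ t, 0 < a t ∧ 0 < b t ∧ a t ≠ b t ∧ θ t ∈ Ioo (0 : ℝ) (Real.pi / 2)) ∧
      (∀ T : ℝ, 0 ≤ T → ∀ t ∈ Icc (-T) T,
        a₀ * Real.exp (-2 * T) ≤ a t ∧ a t ≤ a₀ * Real.exp (2 * T) ∧
        b₀ * Real.exp (-2 * T) ≤ b t ∧ b t ≤ b₀ * Real.exp (2 * T)) ∧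
      (StrictMono θ ∨ StrictAnti θ) := by
  obtain ⟨hθ₀0, hθ₀π⟩ := hθ₀
  have hπ := Real.pi_pos
  set s := a₀ + b₀ with hs_def
  have hs : 0 < s := by positivity
  have hsin0 : 0 < Real.sin (2 * θ₀) :=
    Real.sin_pos_of_pos_of_lt_pi (by linarith) (by linarith)
  set C := (a₀ - b₀) * Real.sin (2 * θ₀) with hC_def
  have hCne : C ≠ 0 := mul_ne_zero (sub_ne_zero.mpr hne) hsin0.ne'
  have hC2pos : 0 < C ^ 2 := by positivity
  set v₀ := (a₀ - b₀) * Real.cos (2 * θ₀) with hv₀_def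
  have hpyth : v₀ ^ 2 + C ^ 2 = (a₀ - b₀) ^ 2 := by
    have h := Real.sin_sq_add_cos_sq (2 * θ₀)
    rw [hv₀_def, hC_def]; nlinarith [h]
  have hdlt : (a₀ - b₀) ^ 2 < s ^ 2 := by nlinarith
  have hC2lt : C ^ 2 < s ^ 2 := by nlinarith
  set B := Real.sqrt (s ^ 2 - C ^ 2) with hB_def
  have hB2 : B ^ 2 = s ^ 2 - C ^ 2 := Real.sq_sqrt (by nlinarith)
  have hBpos : 0 < B := Real.sqrt_pos.mpr (by nlinarith)
  have hv₀B : v₀ ^ 2 < B ^ 2 := by nlinarith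
  have hv₀lt : v₀ < B := by nlinarith
  have hv₀gt : -B < v₀ := by nlinarith
  set K := (B + v₀) / (B - v₀) with hK_def
  have hKpos : 0 < K := div_pos (by linarith) (by linarith)
  set E : ℝ → ℝ := fun t => K * Real.exp (2 * B * t / s) with hE_def
  have hEpos : ∀ t, 0 < E t := fun t => mul_pos hKpos (Real.exp_pos _)
  have hE' : ∀ t, HasDerivAt E (2 * B / s * E t) t := by
    intro t
    have h1 : HasDerivAt (fun t : ℝ => 2 * B * t / s) (2 * B / s) t := by
      simpa using ((hasDerivAt_id t).const_mul (2 * B)).div_const s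
    have h2 := (h1.exp).const_mul K
    refine h2.congr_deriv ?_
    rw [hE_def]
    ring
  have hEne : ∀ t, E t + 1 ≠ 0 := fun t => by have := hEpos t; positivity
  set v : ℝ → ℝ := fun t => (B * E t - B) / (E t + 1) with hv_def
  have hvB : ∀ t, v t ^ 2 < B ^ 2 := by
    intro t
    have h := hEpos t
    rw [hv_def]; simp only
    rw [div_pow, div_lt_iff₀ (by positivity)]
    have hid : B ^ 2 * (E t + 1) ^ 2 - (B * E t - B) ^ 2 = 4 * (B ^ 2 * E t) := by ring
    linarith [mul_pos (pow_pos hBpos 2) h, hid]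
  have hv' : ∀ t, HasDerivAt v ((B ^ 2 - v t ^ 2) / s) t := by
    intro t
    have h1 := (((hE' t).const_mul B).sub_const B).div ((hE' t).add_const 1) (hEne t)
    refine h1.congr_deriv ?_
    rw [hv_def]; simp only
    have h3 := hEne t
    have h4 := hs.ne'
    field_simp
    ring
  set ε := if b₀ < a₀ then (1 : ℝ) else -1 with hε_def
  have hε2 : ε * ε = 1 := by rw [hε_def]; split <;> norm_num
  have hεne : ε ≠ 0 := by rw [hε_def]; split <;> norm_num
  have hεC : 0 < ε * C := by
    rw [hε_def, hC_def]
    rcases lt_or_gt_of_ne hne with h | h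
    · rw [if_neg (by linarith)]
      have h2 := mul_pos (show 0 < b₀ - a₀ by linarith) hsin0
      nlinarith [h2]
    · rw [if_pos (by linarith)]
      have h2 := mul_pos (show 0 < a₀ - b₀ by linarith) hsin0
      nlinarith [h2]
  set u : ℝ → ℝ := fun t => ε * Real.sqrt (v t ^ 2 + C ^ 2) with hu_def
  have hupos2 : ∀ t, 0 < v t ^ 2 + C ^ 2 := fun t => by positivity
  have hsq : ∀ t, Real.sqrt (v t ^ 2 + C ^ 2) = ε * u t := by
    intro t; rw [hu_def]; simp only; rw [← mul_assoc, hε2, one_mul]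
  have hu2 : ∀ t, u t ^ 2 = v t ^ 2 + C ^ 2 := by
    intro t; rw [hu_def]; simp only
    rw [mul_pow, Real.sq_sqrt (hupos2 t).le, sq, hε2, one_mul]
  have hune : ∀ t, u t ≠ 0 := by
    intro t h
    have h2 := hu2 t
    rw [h] at h2
    nlinarith [sq_nonneg (v t)]
  have hu2pos : ∀ t, 0 < u t ^ 2 := by
    intro t; rw [hu2 t]; positivity
  have hu2lt : ∀ t, u t ^ 2 < s ^ 2 := by
    intro t; rw [hu2 t]; nlinarith [hvB t]
  have hult : ∀ t, u t < s := by intro t; nlinarith [hu2lt t]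
  have hugt : ∀ t, -s < u t := by intro t; nlinarith [hu2lt t]
  have hCu : ∀ t, 0 < C / u t := by
    intro t
    have h1 : 0 < C * u t := by
      rw [hu_def]; simp only
      have h2 : C * (ε * Real.sqrt (v t ^ 2 + C ^ 2)) =
          (ε * C) * Real.sqrt (v t ^ 2 + C ^ 2) := by ring
      rw [h2]
      exact mul_pos hεC (Real.sqrt_pos.mpr (hupos2 t))
    rcases mul_pos_iff.mp h1 with ⟨h2, h3⟩ | ⟨h2, h3⟩
    · exact div_pos h2 h3
    · exact div_pos_of_neg_of_neg h2 h3
  have hvu2 : ∀ t, (v t / u t) ^ 2 < 1 := by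
    intro t
    rw [div_pow, div_lt_one (hu2pos t)]
    nlinarith [hu2 t]
  have hvu1 : ∀ t, v t / u t < 1 := by
    intro t; nlinarith [hvu2 t, sq_nonneg (v t / u t - 1)]
  have hvum1 : ∀ t, -1 < v t / u t := by
    intro t; nlinarith [hvu2 t, sq_nonneg (v t / u t + 1)]
  have hu' : ∀ t, HasDerivAt u (v t * ((B ^ 2 - v t ^ 2) / s) / u t) t := by
    intro t
    have h1 : HasDerivAt (fun t => v t ^ 2 + C ^ 2)
        (2 * v t * ((B ^ 2 - v t ^ 2) / s)) t := by
      simpa using ((hv' t).pow 2).add_const (C ^ 2)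
    have h2 := (h1.sqrt (hupos2 t).ne').const_mul ε
    refine h2.congr_deriv ?_
    rw [hsq t]
    field_simp
  -- initial values (computed before making definitions opaque)
  have hE0 : E 0 = K := by rw [hE_def]; simp
  have hv0 : v 0 = v₀ := by
    rw [hv_def]; simp only [hE0]
    rw [hK_def]
    have h1 : B - v₀ ≠ 0 := by linarith
    have hB0 : B ≠ 0 := hBpos.ne'
    field_simp
    ring
    rw [mul_comm B v₀, mul_assoc, mul_inv_cancel₀ hB0, mul_one]
  have hu0 : u 0 = a₀ - b₀ := by
    rw [hu_def]; simp only [hv0]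
    rw [hpyth, Real.sqrt_sq_eq_abs, hε_def]
    rcases lt_or_gt_of_ne hne with h | h
    · rw [if_neg (by linarith), abs_of_neg (by linarith)]; ring
    · rw [if_pos (by linarith), abs_of_pos (by linarith)]; ring
  -- make everything opaque
  clear_value u ε v E K B
  clear hu_def hε_def hv_def hE_def hK_def hB_def hE' hEpos hEne hE0 hvB hεC hε2 hεne hsq hupos2
  set a : ℝ → ℝ := fun t => (s + u t) / 2 with ha_def
  set b : ℝ → ℝ := fun t => (s - u t) / 2 with hb_def
  set θ : ℝ → ℝ := fun t => Real.arccos (v t / u t) / 2 with hθ_def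
  have hapos : ∀ t, 0 < a t := by
    intro t; rw [ha_def]; simp only; linarith [hugt t]
  have hbpos : ∀ t, 0 < b t := by
    intro t; rw [hb_def]; simp only; linarith [hult t]
  have hab : ∀ t, a t - b t = u t := by
    intro t; rw [ha_def, hb_def]; ring
  have h2θ : ∀ t, 2 * θ t = Real.arccos (v t / u t) := by
    intro t; rw [hθ_def]; ring
  have hcos : ∀ t, Real.cos (2 * θ t) = v t / u t := by
    intro t; rw [h2θ t, Real.cos_arccos (hvum1 t).le (hvu1 t).le]
  have hsqC : ∀ t, Real.sqrt (1 - (v t / u t) ^ 2) = C / u t := by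
    intro t
    have h1 : 1 - (v t / u t) ^ 2 = (C / u t) ^ 2 := by
      have h2 := hu2 t
      have h3 := hune t
      field_simp
      linarith [h2]
    rw [h1, Real.sqrt_sq (hCu t).le]
  have hsin : ∀ t, Real.sin (2 * θ t) = C / u t := by
    intro t; rw [h2θ t, Real.sin_arccos, hsqC t]
  have hθmem : ∀ t, θ t ∈ Ioo (0 : ℝ) (Real.pi / 2) := by
    intro t
    constructor
    · have := Real.arccos_pos.mpr (hvu1 t)
      rw [hθ_def]; simp only; linarith
    · have h1 : Real.arccos (v t / u t) ≠ Real.pi := by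
        intro heq
        have h3 := Real.arccos_eq_pi.mp heq
        linarith [hvum1 t]
      have h2 := Real.arccos_le_pi (v t / u t)
      rw [hθ_def]; simp only
      have := lt_of_le_of_ne h2 h1
      linarith
  have hkey : ∀ t, B ^ 2 - v t ^ 2 = s ^ 2 - u t ^ 2 := by
    intro t; rw [hB2, hu2 t]; ring
  have ha' : ∀ t, HasDerivAt a (2 / s * a t * b t * Real.cos (2 * θ t)) t := by
    intro t
    have h1 := ((hu' t).const_add s).div_const 2
    refine h1.congr_deriv ?_
    rw [hcos t, hkey t, show a t = (s + u t) / 2 from rfl, show b t = (s - u t) / 2 from rfl]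
    have h3 := hune t
    have h4 := hs.ne'
    field_simp
    ring
  have hb' : ∀ t, HasDerivAt b (-(2 / s * a t * b t * Real.cos (2 * θ t))) t := by
    intro t
    have h1 := ((hu' t).const_sub s).div_const 2
    refine h1.congr_deriv ?_
    rw [hcos t, hkey t, show a t = (s + u t) / 2 from rfl, show b t = (s - u t) / 2 from rfl]
    have h3 := hune t
    have h4 := hs.ne'
    field_simp
    ring
  have hθ'c : ∀ t, HasDerivAt θ (-((s ^ 2 - u t ^ 2) * C) / (2 * s * u t ^ 2)) t := by
    intro t
    have hq : HasDerivAt (fun t => v t / u t)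
        ((((B ^ 2 - v t ^ 2) / s) * u t - v t * (v t * ((B ^ 2 - v t ^ 2) / s) / u t))
          / u t ^ 2) t := (hv' t).div (hu' t) (hune t)
    have hq2 : HasDerivAt (fun t => v t / u t)
        ((s ^ 2 - u t ^ 2) * C ^ 2 / (s * u t ^ 3)) t := by
      convert hq using 1
      rw [hkey t, show C ^ 2 = u t ^ 2 - v t ^ 2 by linarith [hu2 t]]
      have h3 := hune t
      field_simp
    have h1 := ((Real.hasDerivAt_arccos (hvum1 t).ne' (hvu1 t).ne).comp t hq2).div_const 2
    refine h1.congr_deriv ?_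
    rw [hsqC t]
    have h3 := hune t
    field_simp
  have hθ' : ∀ t, HasDerivAt θ
      (-(2 / s * (a t * b t / (a t - b t)) * Real.sin (2 * θ t))) t := by
    intro t
    have h1 := hθ'c t
    convert h1 using 1
    rw [hsin t, hab t, show a t = (s + u t) / 2 from rfl, show b t = (s - u t) / 2 from rfl]
    have h3 := hune t
    field_simp
    ring
  have ha0 : a 0 = a₀ := by rw [ha_def]; simp only [hu0, hs_def]; ring
  have hb0 : b 0 = b₀ := by rw [hb_def]; simp only [hu0, hs_def]; ring
  have hθ0 : θ 0 = θ₀ := by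
    have h1 : v 0 / u 0 = Real.cos (2 * θ₀) := by
      rw [hv0, hu0, hv₀_def, mul_comm, mul_div_assoc, div_self (sub_ne_zero.mpr hne), mul_one]
    rw [hθ_def]; simp only [h1]
    rw [Real.arccos_cos (by linarith) (by linarith)]
    ring
  have hmem : ∀ t, 0 < a t ∧ 0 < b t ∧ a t ≠ b t ∧ θ t ∈ Ioo (0 : ℝ) (Real.pi / 2) := by
    intro t
    refine ⟨hapos t, hbpos t, ?_, hθmem t⟩
    intro h
    have h2 := hab t
    rw [h, sub_self] at h2
    exact hune t h2.symm
  -- exponential bounds via Gronwall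
  have hboundsa : ∀ T : ℝ, 0 ≤ T → ∀ t ∈ Icc (-T) T,
      a 0 * Real.exp (-2 * T) ≤ a t ∧ a t ≤ a 0 * Real.exp (2 * T) := by
    apply gronwall_aux _ (fun t => 2 / s * a t * b t * Real.cos (2 * θ t)) ha' hapos
    intro t
    have hc1 := Real.cos_le_one (2 * θ t)
    have hc2 := Real.neg_one_le_cos (2 * θ t)
    have h1 := hapos t
    have h2 := hbpos t
    have hbs : b t < s := by
      rw [show b t = (s - u t) / 2 from rfl]; linarith [hugt t]
    have hm1 := mul_le_mul_of_nonneg_left hc1 h2.le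
    have hm2 := mul_le_mul_of_nonneg_left hc2 h2.le
    constructor
    · have h5 : 2 / s * a t * b t * Real.cos (2 * θ t) + (-2) * a t
          = (2 * a t * (b t * Real.cos (2 * θ t) - s)) / s := by field_simp; ring
      rw [h5]
      apply div_nonpos_of_nonpos_of_nonneg _ hs.le
      apply mul_nonpos_of_nonneg_of_nonpos (by positivity)
      nlinarith
    · have h5 : 2 / s * a t * b t * Real.cos (2 * θ t) + 2 * a t
          = (2 * a t * (b t * Real.cos (2 * θ t) + s)) / s := by field_simp
      rw [h5]
      apply div_nonneg _ hs.le
      apply mul_nonneg (by positivity)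
      nlinarith
  have hboundsb : ∀ T : ℝ, 0 ≤ T → ∀ t ∈ Icc (-T) T,
      b 0 * Real.exp (-2 * T) ≤ b t ∧ b t ≤ b 0 * Real.exp (2 * T) := by
    apply gronwall_aux _ (fun t => -(2 / s * a t * b t * Real.cos (2 * θ t))) hb' hbpos
    intro t
    have hc1 := Real.cos_le_one (2 * θ t)
    have hc2 := Real.neg_one_le_cos (2 * θ t)
    have h1 := hapos t
    have h2 := hbpos t
    have has : a t < s := by
      rw [show a t = (s + u t) / 2 from rfl]; linarith [hult t]
    have hm1 := mul_le_mul_of_nonneg_left hc1 h1.le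
    have hm2 := mul_le_mul_of_nonneg_left hc2 h1.le
    constructor
    · have h5 : -(2 / s * a t * b t * Real.cos (2 * θ t)) + (-2) * b t
          = (2 * b t * (-(a t * Real.cos (2 * θ t)) - s)) / s := by field_simp; ring
      rw [h5]
      apply div_nonpos_of_nonpos_of_nonneg _ hs.le
      apply mul_nonpos_of_nonneg_of_nonpos (by positivity)
      nlinarith
    · have h5 : -(2 / s * a t * b t * Real.cos (2 * θ t)) + 2 * b t
          = (2 * b t * (s - a t * Real.cos (2 * θ t))) / s := by field_simp; ring
      rw [h5]
      apply div_nonneg _ hs.le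
      apply mul_nonneg (by positivity)
      nlinarith
  have hbound : ∀ T : ℝ, 0 ≤ T → ∀ t ∈ Icc (-T) T,
      a₀ * Real.exp (-2 * T) ≤ a t ∧ a t ≤ a₀ * Real.exp (2 * T) ∧
      b₀ * Real.exp (-2 * T) ≤ b t ∧ b t ≤ b₀ * Real.exp (2 * T) := by
    intro T hT t ht
    obtain ⟨h1, h2⟩ := hboundsa T hT t ht
    obtain ⟨h3, h4⟩ := hboundsb T hT t ht
    rw [ha0] at h1 h2
    rw [hb0] at h3 h4
    exact ⟨h1, h2, h3, h4⟩
  have hmono : StrictMono θ ∨ StrictAnti θ := by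
    have hd : ∀ t, deriv θ t = -((s ^ 2 - u t ^ 2) * C) / (2 * s * u t ^ 2) :=
      fun t => (hθ'c t).deriv
    rcases lt_or_gt_of_ne hCne with hC | hC
    · left
      apply strictMono_of_deriv_pos
      intro t
      rw [hd t]
      have h1 : (s ^ 2 - u t ^ 2) * C < 0 :=
        mul_neg_of_pos_of_neg (by nlinarith [hu2lt t]) hC
      have h2 : 0 < 2 * s * u t ^ 2 := mul_pos (mul_pos two_pos hs) (hu2pos t)
      exact div_pos (by linarith) h2
    · right
      apply strictAnti_of_deriv_neg
      intro t
      rw [hd t]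
      have h1 : 0 < (s ^ 2 - u t ^ 2) * C :=
        mul_pos (by nlinarith [hu2lt t]) hC
      have h2 : 0 < 2 * s * u t ^ 2 := mul_pos (mul_pos two_pos hs) (hu2pos t)
      exact div_neg_of_neg_of_pos (by linarith) h2
  exact ⟨a, b, θ, ha0, hb0, hθ0, ha', hb', hθ', hmem, hbound, hmono⟩
end

section
/- Exponential collapse of the minor axis: suppose (a, b, θ) solves the tilted-ellipse system with a₀ > b₀ > 0 and 0 < θ₀ < π/4. Then θ(t) is decreasing for t ≥ 0, a(t) is increasing, b(t) is decreasing, and b(t) ≤ b₀ exp(−(2a₀/(a₀+b₀)) cos(2θ₀) t) for all t ≥ 0; consequently b(t) → 0 and a(t) → a₀ + b₀ as t → +∞. Moreover the limiting angle θ_∞ = lim_{t→∞} θ(t) satisfies sin(2θ_∞) = ((a₀−b₀)/(a₀+b₀)) sin(2θ₀) > 0. -/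
open Set Filter Topology

private def Qp (a b θ : ℝ → ℝ) (t : ℝ) : Prop :=
  0 < b t ∧ b t < a t ∧ 0 < θ t ∧ θ t < Real.pi / 4

private lemma monoIcc {f g : ℝ → ℝ} {T : ℝ}
    (hf : ∀ t ∈ Icc (0:ℝ) T, HasDerivAt f (g t) t)
    (hg : ∀ t ∈ Ioo (0:ℝ) T, 0 ≤ g t) :
    MonotoneOn f (Icc (0:ℝ) T) := by
  apply monotoneOn_of_deriv_nonneg (convex_Icc _ _)
    (fun t ht => (hf t ht).continuousAt.continuousWithinAt)
  · intro t ht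
    rw [interior_Icc] at ht
    exact (hf t (Ioo_subset_Icc_self ht)).differentiableAt.differentiableWithinAt
  · intro t ht
    rw [interior_Icc] at ht
    rw [(hf t (Ioo_subset_Icc_self ht)).deriv]
    exact hg t ht

private lemma antiIcc {f g : ℝ → ℝ} {T : ℝ}
    (hf : ∀ t ∈ Icc (0:ℝ) T, HasDerivAt f (g t) t)
    (hg : ∀ t ∈ Ioo (0:ℝ) T, g t ≤ 0) :
    AntitoneOn f (Icc (0:ℝ) T) := by
  apply antitoneOn_of_deriv_nonpos (convex_Icc _ _)
    (fun t ht => (hf t ht).continuousAt.continuousWithinAt)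
  · intro t ht
    rw [interior_Icc] at ht
    exact (hf t (Ioo_subset_Icc_self ht)).differentiableAt.differentiableWithinAt
  · intro t ht
    rw [interior_Icc] at ht
    rw [(hf t (Ioo_subset_Icc_self ht)).deriv]
    exact hg t ht

private lemma monoIci {f g : ℝ → ℝ}
    (hf : ∀ t ∈ Ici (0:ℝ), HasDerivAt f (g t) t)
    (hg : ∀ t ∈ Ioi (0:ℝ), 0 ≤ g t) :
    MonotoneOn f (Ici (0:ℝ)) := by
  apply monotoneOn_of_deriv_nonneg (convex_Ici _)
    (fun t ht => (hf t ht).continuousAt.continuousWithinAt)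
  · intro t ht
    rw [interior_Ici] at ht
    exact (hf t (Ioi_subset_Ici_self ht)).differentiableAt.differentiableWithinAt
  · intro t ht
    rw [interior_Ici] at ht
    rw [(hf t (Ioi_subset_Ici_self ht)).deriv]
    exact hg t ht

private lemma antiIci {f g : ℝ → ℝ}
    (hf : ∀ t ∈ Ici (0:ℝ), HasDerivAt f (g t) t)
    (hg : ∀ t ∈ Ioi (0:ℝ), g t ≤ 0) :
    AntitoneOn f (Ici (0:ℝ)) := by
  apply antitoneOn_of_deriv_nonpos (convex_Ici _)
    (fun t ht => (hf t ht).continuousAt.continuousWithinAt)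
  · intro t ht
    rw [interior_Ici] at ht
    exact (hf t (Ioi_subset_Ici_self ht)).differentiableAt.differentiableWithinAt
  · intro t ht
    rw [interior_Ici] at ht
    rw [(hf t (Ioi_subset_Ici_self ht)).deriv]
    exact hg t ht

private lemma constIci {f : ℝ → ℝ} (hf : ∀ t ∈ Ici (0:ℝ), HasDerivAt f 0 t) :
    ∀ t ∈ Ici (0:ℝ), f t = f 0 := by
  intro T hT
  exact constant_of_has_deriv_right_zero
    (fun t ht => (hf t ht.1).continuousAt.continuousWithinAt)
    (fun t ht => (hf t ht.1).hasDerivWithinAt) T ⟨hT, le_rfl⟩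

set_option maxHeartbeats 2000000 in
/-- Exponential collapse of the minor axis for the tilted-ellipse system with
`a₀ > b₀ > 0` and `0 < θ₀ < π/4`: `θ` decreases, `a` increases, `b` decreases with
`b(t) ≤ b₀ exp(−(2a₀/(a₀+b₀)) cos(2θ₀) t)`, hence `b → 0`, `a → a₀ + b₀`, and the
limiting angle `θ_∞` satisfies `sin(2θ_∞) = ((a₀−b₀)/(a₀+b₀)) sin(2θ₀) > 0`. -/
theorem stmt_18 (a b θ : ℝ → ℝ) (a₀ b₀ θ₀ : ℝ)
    (hb₀ : 0 < b₀) (hab : b₀ < a₀)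
    (hθ₀ : 0 < θ₀) (hθ₀' : θ₀ < Real.pi / 4)
    (hia : a 0 = a₀) (hib : b 0 = b₀) (hiθ : θ 0 = θ₀)
    (hda : ∀ t ∈ Ici (0 : ℝ),
      HasDerivAt a (2 / (a₀ + b₀) * a t * b t * Real.cos (2 * θ t)) t)
    (hdb : ∀ t ∈ Ici (0 : ℝ),
      HasDerivAt b (-(2 / (a₀ + b₀) * a t * b t * Real.cos (2 * θ t))) t)
    (hdθ : ∀ t ∈ Ici (0 : ℝ), HasDerivAt θ
      (-(2 / (a₀ + b₀) * (a t * b t / (a t - b t)) * Real.sin (2 * θ t))) t) :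
    AntitoneOn θ (Ici (0 : ℝ)) ∧ MonotoneOn a (Ici (0 : ℝ)) ∧ AntitoneOn b (Ici (0 : ℝ)) ∧
    (∀ t ∈ Ici (0 : ℝ),
      b t ≤ b₀ * Real.exp (-(2 * a₀ / (a₀ + b₀)) * Real.cos (2 * θ₀) * t)) ∧
    Tendsto b atTop (𝓝 0) ∧ Tendsto a atTop (𝓝 (a₀ + b₀)) ∧
    ∃ θinf : ℝ, Tendsto θ atTop (𝓝 θinf) ∧
      Real.sin (2 * θinf) = (a₀ - b₀) / (a₀ + b₀) * Real.sin (2 * θ₀) ∧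
      0 < Real.sin (2 * θinf) := by
  have hpi := Real.pi_pos
  have hs : (0:ℝ) < a₀ + b₀ := by linarith
  have hsne : (a₀ + b₀ : ℝ) ≠ 0 := ne_of_gt hs
  -- the sum a + b is conserved
  have hsum : ∀ t ∈ Ici (0:ℝ), a t + b t = a₀ + b₀ := by
    have h := constIci (f := fun t => a t + b t) (fun t ht => by
      have := (hda t ht).add (hdb t ht)
      exact this.congr_deriv (by ring))
    intro t ht
    have := h t ht
    rw [this, hia, hib]
  have hQ0 : Qp a b θ 0 := by
    refine ⟨by rw [hib]; exact hb₀, by rw [hia, hib]; linarith, by rw [hiθ]; exact hθ₀,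
      by rw [hiθ]; exact hθ₀'⟩
  -- key step: the open region propagates to the boundary of its maximal interval
  have key : ∀ T, 0 ≤ T → (∀ u, 0 ≤ u → u < T → Qp a b θ u) → Qp a b θ T := by
    intro T hT hprev
    rcases eq_or_lt_of_le hT with rfl | hTpos
    · exact hQ0
    have hIcc : Icc (0:ℝ) T ⊆ Ici 0 := fun u hu => hu.1
    have hQIco : ∀ u ∈ Ico (0:ℝ) T, Qp a b θ u := by
      rintro u ⟨hu1, hu2⟩
      exact hprev u hu1 hu2
    -- (1) positivity of b at T via comparison with e^{-2t}
    have hv : MonotoneOn (fun t => b t * Real.exp (2*t)) (Icc (0:ℝ) T) := by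
      apply monoIcc (g := fun t => -(2/(a₀+b₀) * a t * b t * Real.cos (2*θ t)) * Real.exp (2*t)
        + b t * (Real.exp (2*t) * 2))
      · intro t ht
        have he : HasDerivAt (fun t : ℝ => Real.exp (2*t)) (Real.exp (2*t) * 2) t := by
          simpa using ((hasDerivAt_id t).const_mul (2:ℝ)).exp
        exact (hdb t (hIcc ht)).mul he
      · intro u hu
        obtain ⟨hb, hba, hθp, hθ4⟩ := hQIco u ⟨hu.1.le, hu.2⟩
        have hau : 0 < a u := lt_trans hb hba
        have hcos1 : Real.cos (2*θ u) ≤ 1 := Real.cos_le_one _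
        have hcos0 : 0 ≤ Real.cos (2*θ u) :=
          Real.cos_nonneg_of_mem_Icc ⟨by linarith, by linarith⟩
        have has : a u ≤ a₀ + b₀ := by
          have := hsum u hu.1.le
          linarith
        have hac : a u * Real.cos (2*θ u) ≤ a₀ + b₀ := by nlinarith
        have he := Real.exp_pos (2*u)
        have hkey : 2/(a₀+b₀) * a u * b u * Real.cos (2*θ u) ≤ 2 * b u := by
          rw [div_mul_eq_mul_div, div_mul_eq_mul_div, div_mul_eq_mul_div, div_le_iff₀ hs]
          nlinarith [mul_le_mul_of_nonneg_left hac (show (0:ℝ) ≤ 2 * b u by linarith)]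
        nlinarith [mul_le_mul_of_nonneg_right hkey he.le]
    have hbT : 0 < b T := by
      have h1 := hv ⟨le_rfl, hT⟩ ⟨hT, le_rfl⟩ hT
      simp only [mul_zero, Real.exp_zero, mul_one, hib] at h1
      nlinarith [Real.exp_pos (2*T)]
    -- (2) a - b is nondecreasing
    have hd : MonotoneOn (fun t => a t - b t) (Icc (0:ℝ) T) := by
      apply monoIcc (g := fun t => 2 / (a₀ + b₀) * a t * b t * Real.cos (2 * θ t)
        - -(2 / (a₀ + b₀) * a t * b t * Real.cos (2 * θ t)))
      · intro t ht
        exact (hda t (hIcc ht)).sub (hdb t (hIcc ht))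
      · intro u hu
        obtain ⟨hb, hba, hθp, hθ4⟩ := hQIco u ⟨hu.1.le, hu.2⟩
        have hau : 0 < a u := lt_trans hb hba
        have hcos0 : 0 ≤ Real.cos (2*θ u) :=
          Real.cos_nonneg_of_mem_Icc ⟨by linarith, by linarith⟩
        have h1 : 0 ≤ 2 / (a₀ + b₀) * a u * b u * Real.cos (2 * θ u) := by
          apply mul_nonneg _ hcos0
          apply mul_nonneg _ hb.le
          apply mul_nonneg _ hau.le
          positivity
        linarith
    have habT : a₀ - b₀ ≤ a T - b T := by
      have h1 := hd ⟨le_rfl, hT⟩ ⟨hT, le_rfl⟩ hT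
      simp only [hia, hib] at h1
      linarith
    have hbaT : b T < a T := by linarith
    -- (3) θ is nonincreasing on [0,T]
    have hθanti : AntitoneOn θ (Icc (0:ℝ) T) := by
      apply antiIcc (g := fun t =>
        -(2 / (a₀ + b₀) * (a t * b t / (a t - b t)) * Real.sin (2 * θ t)))
      · intro t ht
        exact hdθ t (hIcc ht)
      · intro u hu
        obtain ⟨hb, hba, hθp, hθ4⟩ := hQIco u ⟨hu.1.le, hu.2⟩
        have hau : 0 < a u := lt_trans hb hba
        have hsin0 : 0 ≤ Real.sin (2*θ u) :=
          Real.sin_nonneg_of_nonneg_of_le_pi (by linarith) (by linarith)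
        have h1 : 0 ≤ 2 / (a₀ + b₀) * (a u * b u / (a u - b u)) * Real.sin (2 * θ u) := by
          apply mul_nonneg _ hsin0
          apply mul_nonneg (by positivity)
          exact le_of_lt (div_pos (mul_pos hau hb) (by linarith))
        linarith
    have hθT : θ T ≤ θ₀ := by
      have h1 := hθanti ⟨le_rfl, hT⟩ ⟨hT, le_rfl⟩ hT
      rwa [hiθ] at h1
    have hθT4 : θ T < Real.pi / 4 := lt_of_le_of_lt hθT hθ₀'
    -- (4) conserved quantity (a-b) sin(2θ)
    have hET : (a T - b T) * Real.sin (2*θ T) = (a₀ - b₀) * Real.sin (2*θ₀) := by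
      have hE0 : ∀ u ∈ Ico (0:ℝ) T,
          HasDerivAt (fun t => (a t - b t) * Real.sin (2 * θ t)) 0 u := by
        intro u hu
        obtain ⟨hb, hba, hθp, hθ4⟩ := hQIco u hu
        have hu' : u ∈ Ici (0:ℝ) := hu.1
        have habu : a u - b u ≠ 0 := ne_of_gt (by linarith)
        have h := ((hda u hu').sub (hdb u hu')).mul (((hdθ u hu').const_mul (2:ℝ)).sin)
        exact h.congr_deriv (by rw [Pi.sub_apply]; field_simp; ring)
      have hc : ContinuousOn (fun t => (a t - b t) * Real.sin (2 * θ t)) (Icc (0:ℝ) T) := by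
        intro u hu
        exact (((hda u hu.1).continuousAt.sub (hdb u hu.1).continuousAt).mul
          (Real.continuous_sin.continuousAt.comp
            (continuousAt_const.mul (hdθ u hu.1).continuousAt))).continuousWithinAt
      have h := constant_of_has_deriv_right_zero hc
        (fun u hu => (hE0 u hu).hasDerivWithinAt) T ⟨hT, le_rfl⟩
      rw [h, hia, hib, hiθ]
    have hc0 : 0 < (a₀ - b₀) * Real.sin (2*θ₀) :=
      mul_pos (by linarith) (Real.sin_pos_of_pos_of_lt_pi (by linarith) (by linarith))
    have hsinT : 0 < Real.sin (2*θ T) := by nlinarith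
    -- (5) θ T > 0 via left limit and sin > 0
    have hθTnn : 0 ≤ θ T := by
      have hcont : Tendsto θ (𝓝[<] T) (𝓝 (θ T)) :=
        ((hdθ T (le_of_lt hTpos)).continuousAt.continuousWithinAt)
      refine ge_of_tendsto hcont ?_
      have h1 : ∀ᶠ u in 𝓝[<] T, u ∈ Ioi (0:ℝ) :=
        eventually_nhdsWithin_of_eventually_nhds (isOpen_Ioi.eventually_mem hTpos)
      filter_upwards [h1, self_mem_nhdsWithin] with u hu1 hu2
      exact (hQIco u ⟨le_of_lt hu1, hu2⟩).2.2.1.le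
    have hθTpos : 0 < θ T := by
      rcases eq_or_lt_of_le hθTnn with h | h
      · exfalso
        rw [← h] at hsinT
        simp at hsinT
      · exact h
    exact ⟨hbT, hbaT, hθTpos, hθT4⟩
  -- global invariance
  have hQ : ∀ t ∈ Ici (0:ℝ), Qp a b θ t := by
    by_contra hcon
    push_neg at hcon
    obtain ⟨t₁, ht₁, hbad⟩ := hcon
    have hne : {t : ℝ | 0 ≤ t ∧ ¬ Qp a b θ t}.Nonempty := ⟨t₁, ht₁, hbad⟩
    have hbdd : BddBelow {t : ℝ | 0 ≤ t ∧ ¬ Qp a b θ t} := ⟨0, fun x hx => hx.1⟩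
    set T := sInf {t : ℝ | 0 ≤ t ∧ ¬ Qp a b θ t} with hTdef
    have hT0 : 0 ≤ T := le_csInf hne fun x hx => hx.1
    have hprev : ∀ u, 0 ≤ u → u < T → Qp a b θ u := by
      intro u hu huT
      by_contra hq
      exact absurd (csInf_le hbdd ⟨hu, hq⟩) (not_le.2 huT)
    have hQT := key T hT0 hprev
    obtain ⟨hb1, hb2, hb3, hb4⟩ := hQT
    have hev : ∀ᶠ u in 𝓝 T, Qp a b θ u := by
      have hbc := (hdb T hT0).continuousAt
      have hac := (hda T hT0).continuousAt
      have hθc := (hdθ T hT0).continuousAt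
      have h1 : ∀ᶠ u in 𝓝 T, 0 < b u := hbc.eventually (eventually_gt_nhds hb1)
      have h2 : ∀ᶠ u in 𝓝 T, 0 < a u - b u :=
        (hac.sub hbc).eventually (eventually_gt_nhds (sub_pos.2 hb2))
      have h3 : ∀ᶠ u in 𝓝 T, 0 < θ u := hθc.eventually (eventually_gt_nhds hb3)
      have h4 : ∀ᶠ u in 𝓝 T, θ u < Real.pi / 4 := hθc.eventually (eventually_lt_nhds hb4)
      filter_upwards [h1, h2, h3, h4] with u hu1 hu2 hu3 hu4
      exact ⟨hu1, by linarith, hu3, hu4⟩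
    rw [Metric.eventually_nhds_iff] at hev
    obtain ⟨ε, hε, hball⟩ := hev
    have hlow : T + ε/2 ≤ T := by
      rw [hTdef]
      refine le_csInf hne fun x hx => ?_
      by_contra hlt
      push_neg at hlt
      have hTx : T ≤ x := csInf_le hbdd hx
      refine hx.2 (hball ?_)
      rw [Real.dist_eq, abs_of_nonneg (by linarith)]
      linarith
    linarith
  -- global monotonicity
  have hθmono : AntitoneOn θ (Ici (0:ℝ)) := by
    apply antiIci (g := fun t =>
      -(2 / (a₀ + b₀) * (a t * b t / (a t - b t)) * Real.sin (2 * θ t))) hdθ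
    intro u hu
    obtain ⟨hb, hba, hθp, hθ4⟩ := hQ u (Ioi_subset_Ici_self hu)
    have hau : 0 < a u := lt_trans hb hba
    have hsin0 : 0 ≤ Real.sin (2*θ u) :=
      Real.sin_nonneg_of_nonneg_of_le_pi (by linarith) (by linarith)
    have h1 : 0 ≤ 2 / (a₀ + b₀) * (a u * b u / (a u - b u)) * Real.sin (2 * θ u) := by
      apply mul_nonneg _ hsin0
      apply mul_nonneg (by positivity)
      exact le_of_lt (div_pos (mul_pos hau hb) (by linarith))
    linarith
  have hamono : MonotoneOn a (Ici (0:ℝ)) := by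
    apply monoIci (g := fun t => 2 / (a₀ + b₀) * a t * b t * Real.cos (2 * θ t)) hda
    intro u hu
    obtain ⟨hb, hba, hθp, hθ4⟩ := hQ u (Ioi_subset_Ici_self hu)
    have hau : 0 < a u := lt_trans hb hba
    have hcos0 : 0 ≤ Real.cos (2*θ u) :=
      Real.cos_nonneg_of_mem_Icc ⟨by linarith, by linarith⟩
    apply mul_nonneg _ hcos0
    apply mul_nonneg _ hb.le
    apply mul_nonneg _ hau.le
    positivity
  have hbanti : AntitoneOn b (Ici (0:ℝ)) := by
    apply antiIci (g := fun t => -(2 / (a₀ + b₀) * a t * b t * Real.cos (2 * θ t))) hdb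
    intro u hu
    obtain ⟨hb, hba, hθp, hθ4⟩ := hQ u (Ioi_subset_Ici_self hu)
    have hau : 0 < a u := lt_trans hb hba
    have hcos0 : 0 ≤ Real.cos (2*θ u) :=
      Real.cos_nonneg_of_mem_Icc ⟨by linarith, by linarith⟩
    have h1 : 0 ≤ 2 / (a₀ + b₀) * a u * b u * Real.cos (2 * θ u) := by
      apply mul_nonneg _ hcos0
      apply mul_nonneg _ hb.le
      apply mul_nonneg _ hau.le
      positivity
    linarith
  have hθle : ∀ t ∈ Ici (0:ℝ), θ t ≤ θ₀ := by
    intro t ht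
    have h1 := hθmono self_mem_Ici ht ht
    rwa [hiθ] at h1
  have hage : ∀ t ∈ Ici (0:ℝ), a₀ ≤ a t := by
    intro t ht
    have h1 := hamono self_mem_Ici ht ht
    rwa [hia] at h1
  have hcosθ₀ : 0 < Real.cos (2*θ₀) :=
    Real.cos_pos_of_mem_Ioo ⟨by linarith, by linarith⟩
  have hsin₀ : 0 < Real.sin (2*θ₀) :=
    Real.sin_pos_of_pos_of_lt_pi (by linarith) (by linarith)
  set K := 2 * a₀ / (a₀ + b₀) * Real.cos (2*θ₀) with hKdef
  have hK0 : 0 < K := mul_pos (div_pos (by linarith) hs) hcosθ₀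
  -- exponential decay
  have hw : AntitoneOn (fun t => b t * Real.exp (K*t)) (Ici (0:ℝ)) := by
    apply antiIci (g := fun t => -(2/(a₀+b₀) * a t * b t * Real.cos (2*θ t)) * Real.exp (K*t)
      + b t * (Real.exp (K*t) * K))
    · intro t ht
      have he : HasDerivAt (fun t : ℝ => Real.exp (K*t)) (Real.exp (K*t) * K) t := by
        simpa using ((hasDerivAt_id t).const_mul K).exp
      exact (hdb t ht).mul he
    · intro u hu
      have hu' : u ∈ Ici (0:ℝ) := Ioi_subset_Ici_self hu
      obtain ⟨hb, hba, hθp, hθ4⟩ := hQ u hu'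
      have hau : 0 < a u := lt_trans hb hba
      have hcos : Real.cos (2*θ₀) ≤ Real.cos (2*θ u) := by
        apply Real.cos_le_cos_of_nonneg_of_le_pi (by linarith) (by linarith)
        have := hθle u hu'
        linarith
      have haa : a₀ ≤ a u := hage u hu'
      have hKb : K * b u ≤ 2/(a₀+b₀) * a u * b u * Real.cos (2*θ u) := by
        have h1 : a₀ * Real.cos (2*θ₀) * b u ≤ a u * Real.cos (2*θ u) * b u :=
          mul_le_mul_of_nonneg_right
            (mul_le_mul haa hcos hcosθ₀.le (by linarith)) hb.le
        have h3 : (0:ℝ) < 2/(a₀+b₀) := by positivity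
        calc K * b u = 2/(a₀+b₀) * (a₀ * Real.cos (2*θ₀) * b u) := by rw [hKdef]; ring
          _ ≤ 2/(a₀+b₀) * (a u * Real.cos (2*θ u) * b u) :=
              mul_le_mul_of_nonneg_left h1 h3.le
          _ = 2/(a₀+b₀) * a u * b u * Real.cos (2*θ u) := by ring
      nlinarith [mul_le_mul_of_nonneg_right hKb (Real.exp_pos (K*u)).le]
  have hbound : ∀ t ∈ Ici (0:ℝ),
      b t ≤ b₀ * Real.exp (-(2 * a₀ / (a₀ + b₀)) * Real.cos (2 * θ₀) * t) := by
    intro t ht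
    have h1 := hw self_mem_Ici ht ht
    simp only [mul_zero, Real.exp_zero, mul_one, hib] at h1
    have h2 : -(2 * a₀ / (a₀ + b₀)) * Real.cos (2 * θ₀) * t = -(K * t) := by
      rw [hKdef]; ring
    rw [h2, Real.exp_neg, ← div_eq_mul_inv, le_div_iff₀ (Real.exp_pos _)]
    exact h1
  -- limits
  have hexp_tend : Tendsto
      (fun t : ℝ => b₀ * Real.exp (-(2 * a₀ / (a₀ + b₀)) * Real.cos (2 * θ₀) * t))
      atTop (𝓝 0) := by
    have h1 : Tendsto (fun t : ℝ => K * t) atTop atTop :=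
      Tendsto.const_mul_atTop hK0 tendsto_id
    have h2 : Tendsto (fun t : ℝ => Real.exp (-(K * t))) atTop (𝓝 0) :=
      Real.tendsto_exp_neg_atTop_nhds_zero.comp h1
    have h3 := h2.const_mul b₀
    rw [mul_zero] at h3
    refine h3.congr fun t => ?_
    rw [show -(2 * a₀ / (a₀ + b₀)) * Real.cos (2 * θ₀) * t = -(K * t) by rw [hKdef]; ring]
  have hbtend : Tendsto b atTop (𝓝 0) :=
    tendsto_of_tendsto_of_tendsto_of_le_of_le' tendsto_const_nhds hexp_tend
      ((eventually_ge_atTop 0).mono fun t ht => (hQ t ht).1.le)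
      ((eventually_ge_atTop 0).mono fun t ht => hbound t ht)
  have hatend : Tendsto a atTop (𝓝 (a₀ + b₀)) := by
    have h1 : Tendsto (fun t => (a₀ + b₀) - b t) atTop (𝓝 ((a₀ + b₀) - 0)) :=
      tendsto_const_nhds.sub hbtend
    rw [sub_zero] at h1
    exact h1.congr' ((eventually_ge_atTop 0).mono fun t ht => by
      have := hsum t ht; linarith)
  -- limiting angle
  have hθbdd : BddBelow (Set.range fun t : ℝ => θ (max t 0)) := by
    refine ⟨0, ?_⟩
    rintro x ⟨t, rfl⟩
    exact (hQ _ (le_max_right t 0)).2.2.1.le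
  have hθanti' : Antitone (fun t : ℝ => θ (max t 0)) := fun x y hxy =>
    hθmono (le_max_right x 0) (le_max_right y 0) (max_le_max hxy le_rfl)
  have hθtend' := tendsto_atTop_ciInf hθanti' hθbdd
  set θinf := ⨅ t : ℝ, θ (max t 0) with hθinfdef
  have hθtend : Tendsto θ atTop (𝓝 θinf) :=
    hθtend'.congr' ((eventually_ge_atTop 0).mono fun t ht => by
      rw [max_eq_left ht])
  -- conserved quantity globally
  have hEconst : ∀ t ∈ Ici (0:ℝ),
      (a t - b t) * Real.sin (2 * θ t) = (a₀ - b₀) * Real.sin (2 * θ₀) := by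
    have h := constIci (f := fun t => (a t - b t) * Real.sin (2 * θ t)) (fun u hu => by
      obtain ⟨hb, hba, hθp, hθ4⟩ := hQ u hu
      have habu : a u - b u ≠ 0 := ne_of_gt (by linarith)
      have h := ((hda u hu).sub (hdb u hu)).mul (((hdθ u hu).const_mul (2:ℝ)).sin)
      exact h.congr_deriv (by rw [Pi.sub_apply]; field_simp; ring))
    intro t ht
    have h1 := h t ht
    rw [h1, hia, hib, hiθ]
  have hsin_tend : Tendsto (fun t => (a t - b t) * Real.sin (2 * θ t)) atTop
      (𝓝 ((a₀ + b₀) * Real.sin (2 * θinf))) := by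
    have h1 := hatend.sub hbtend
    rw [sub_zero] at h1
    exact h1.mul ((Real.continuous_sin.tendsto _).comp (hθtend.const_mul 2))
  have hconst_tend : Tendsto (fun t => (a t - b t) * Real.sin (2 * θ t)) atTop
      (𝓝 ((a₀ - b₀) * Real.sin (2 * θ₀))) :=
    tendsto_const_nhds.congr' ((eventually_ge_atTop 0).mono fun t ht =>
      (hEconst t ht).symm)
  have hkeyeq : (a₀ + b₀) * Real.sin (2 * θinf) = (a₀ - b₀) * Real.sin (2 * θ₀) :=
    tendsto_nhds_unique hsin_tend hconst_tend
  have hsineq : Real.sin (2 * θinf) = (a₀ - b₀) / (a₀ + b₀) * Real.sin (2 * θ₀) := by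
    rw [show (a₀ - b₀) / (a₀ + b₀) * Real.sin (2 * θ₀)
        = ((a₀ - b₀) * Real.sin (2 * θ₀)) / (a₀ + b₀) by ring, eq_div_iff hsne]
    linear_combination hkeyeq
  have hsinpos : 0 < Real.sin (2 * θinf) := by
    rw [hsineq]
    exact mul_pos (div_pos (by linarith) hs) hsin₀
  exact ⟨hθmono, hamono, hbanti, hbound, hbtend, hatend, θinf, hθtend, hsineq, hsinpos⟩
end
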